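/- arXiv:2511.13538 — 3 statements merged into one kernel-verified Lean document; each statement's English description precedes it below -/
import Mathlib

section
/- The function Q(x) = (3 sech²(2x))^{1/4} is smooth, positive, even, tends to 0 as |x| → ∞, and satisfies −Q''(x) + Q(x) − Q(x)⁵ = 0 for all x ∈ ℝ. Moreover it is the unique positive solution up to translation: if φ : ℝ → ℝ is twice continuously differentiable, positive, satisfies φ(x) → 0 as |x| → ∞ and −φ'' + φ − φ⁵ = 0 on ℝ, then there exists x₀ ∈ ℝ with φ(x) = Q(x − x₀) for all x. -/
open MeasureTheory Real Set Filter

/-- The ground state of the quintic gKdV equation: `Q x = (3 sech²(2x))^(1/4)`. -/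
noncomputable def Q (x : ℝ) : ℝ := (3 * (Real.cosh (2*x))⁻¹ ^ 2) ^ (1/4 : ℝ)

namespace QAux

noncomputable def c : ℝ := (3:ℝ) ^ (1/4 : ℝ)
noncomputable def S (x : ℝ) : ℝ := Real.cosh (2*x) ^ (-(1/2) : ℝ)

lemma c_pos : 0 < c := Real.rpow_pos_of_pos (by norm_num) _

lemma c_pow4 : c ^ 4 = 3 := by
  rw [c, ← Real.rpow_natCast ((3:ℝ)^(1/4:ℝ)) 4, ← Real.rpow_mul (by norm_num : (0:ℝ) ≤ 3)]
  norm_num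

lemma c_le_two : c ≤ 2 := by nlinarith [c_pow4, c_pos, sq_nonneg (c-2), sq_nonneg (c+2), sq_nonneg c]

lemma c5 : c ^ 5 = 3 * c := by rw [show (5:ℕ) = 4+1 from rfl, pow_succ, c_pow4]

lemma cosh_pos' (x : ℝ) : 0 < Real.cosh (2*x) := Real.cosh_pos _
lemma one_le_cosh' (x : ℝ) : 1 ≤ Real.cosh (2*x) := Real.one_le_cosh _

lemma S_pos (x : ℝ) : 0 < S x := Real.rpow_pos_of_pos (cosh_pos' x) _

lemma S_sq (x : ℝ) : S x ^ 2 = (Real.cosh (2*x))⁻¹ := by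
  rw [S, ← Real.rpow_natCast (Real.cosh (2*x) ^ (-(1/2):ℝ)) 2,
    ← Real.rpow_mul (cosh_pos' x).le]
  norm_num [Real.rpow_neg_one]

lemma cosh_mul_S_cube (x : ℝ) : Real.cosh (2*x) * S x ^ 3 = S x := by
  have h := S_sq x
  have h3 : S x ^ 3 = S x * S x ^ 2 := by ring
  rw [h3, h]
  field_simp

lemma cosh_sq_mul_S5 (x : ℝ) : Real.cosh (2*x) ^ 2 * S x ^ 5 = S x := by
  have h := S_sq x
  have h5 : S x ^ 5 = S x * (S x ^ 2) ^ 2 := by ring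
  rw [h5, h]
  have hne := (cosh_pos' x).ne'
  field_simp

lemma S_le_one (x : ℝ) : S x ≤ 1 :=
  Real.rpow_le_one_of_one_le_of_nonpos (one_le_cosh' x) (by norm_num)

lemma Q_eq (x : ℝ) : Q x = c * S x := by
  have hu := cosh_pos' x
  rw [Q, c, S, inv_pow, ← Real.rpow_natCast (Real.cosh (2*x)) 2, ← Real.rpow_neg hu.le,
    Real.mul_rpow (by norm_num) (Real.rpow_nonneg hu.le _), ← Real.rpow_mul hu.le]
  norm_num

lemma Q_pos (x : ℝ) : 0 < Q x := by rw [Q_eq]; exact mul_pos c_pos (S_pos x)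

lemma Q_le_two (x : ℝ) : Q x ≤ 2 := by
  rw [Q_eq]
  nlinarith [S_le_one x, S_pos x, c_pos, c_le_two]

lemma hasDerivAt_two_mul (x : ℝ) : HasDerivAt (fun x : ℝ => 2*x) 2 x := by
  simpa using (hasDerivAt_id x).const_mul (2:ℝ)

lemma hasDerivAt_cosh2 (x : ℝ) :
    HasDerivAt (fun x : ℝ => Real.cosh (2*x)) (2 * Real.sinh (2*x)) x := by
  have h := (Real.hasDerivAt_cosh (2*x)).comp x (hasDerivAt_two_mul x)
  refine h.congr_deriv ?_
  ring

lemma S_cube_eq (x : ℝ) : Real.cosh (2*x) ^ (-(1/2) - 1 : ℝ) = S x ^ 3 := by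
  rw [S, ← Real.rpow_natCast (Real.cosh (2*x) ^ (-(1/2):ℝ)) 3,
    ← Real.rpow_mul (cosh_pos' x).le]
  norm_num

lemma hasDerivAt_S (x : ℝ) :
    HasDerivAt S (-(Real.sinh (2*x) * S x ^ 3)) x := by
  have h := (hasDerivAt_cosh2 x).rpow_const (p := -(1/2:ℝ)) (Or.inl (cosh_pos' x).ne')
  refine h.congr_deriv ?_
  rw [S_cube_eq]
  ring

noncomputable def Qd (x : ℝ) : ℝ := -(c * (Real.sinh (2*x) * S x ^ 3))

lemma hasDerivAt_Q (x : ℝ) : HasDerivAt Q (Qd x) x := by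
  have h := ((hasDerivAt_S x).const_mul c)
  have hQ : Q = fun x => c * S x := funext Q_eq
  rw [hQ, Qd]
  refine h.congr_deriv ?_
  ring

lemma hasDerivAt_sinh2 (x : ℝ) :
    HasDerivAt (fun x : ℝ => Real.sinh (2*x)) (2 * Real.cosh (2*x)) x := by
  have h := (Real.hasDerivAt_sinh (2*x)).comp x (hasDerivAt_two_mul x)
  refine h.congr_deriv ?_
  ring

lemma hasDerivAt_Qd (x : ℝ) : HasDerivAt Qd (Q x - Q x ^ 5) x := by
  have h1 := (hasDerivAt_sinh2 x).mul ((hasDerivAt_S x).pow 3)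
  have h2 := (h1.const_mul c).neg
  have hQd : Qd = fun x => -(c * (Real.sinh (2*x) * S x ^ 3)) := rfl
  rw [hQd]
  refine h2.congr_deriv ?_
  symm
  have hc := cosh_mul_S_cube x
  have h5 := cosh_sq_mul_S5 x
  have hs : Real.cosh (2*x) ^ 2 - Real.sinh (2*x) ^ 2 = 1 := Real.cosh_sq_sub_sinh_sq (2*x)
  have hc5 := c5
  rw [Q_eq]
  push_cast [Pi.pow_apply]
  linear_combination (2*c)*hc - (3*c)*h5 + (3*c*S x^5)*hs - (S x^5)*hc5


lemma contDiff_Q : ContDiff ℝ (⊤ : ℕ∞) Q := by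
  have hc : ContDiff ℝ (⊤:ℕ∞) (fun x:ℝ => Real.cosh (2*x)) :=
    Real.contDiff_cosh.comp (contDiff_const.mul contDiff_id)
  have h1 : ContDiff ℝ (⊤:ℕ∞) (fun x : ℝ => 3 * (Real.cosh (2*x))⁻¹ ^ 2) :=
    contDiff_const.mul ((hc.inv (fun x => (cosh_pos' x).ne')).pow 2)
  rw [contDiff_iff_contDiffAt]
  intro x
  exact (h1.contDiffAt).rpow_const_of_ne (by positivity)

lemma Q_even (x : ℝ) : Q (-x) = Q x := by
  rw [Q, Q, show 2*(-x) = -(2*x) by ring, Real.cosh_neg]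

lemma Q_tendsto_atTop : Tendsto Q atTop (nhds 0) := by
  have h1 : Tendsto (fun x:ℝ => Real.cosh (2*x)) atTop atTop := by
    apply tendsto_atTop_mono (f := fun x : ℝ => Real.exp (2*x) / 2)
    · intro x
      rw [Real.cosh_eq]
      have := (Real.exp_pos (-(2*x))).le
      linarith
    · exact (Real.tendsto_exp_atTop.comp (tendsto_id.const_mul_atTop two_pos)).atTop_div_const
        two_pos
  have h2 : Tendsto S atTop (nhds 0) := by
    have := (tendsto_rpow_neg_atTop (by norm_num : (0:ℝ) < 1/2)).comp h1
    have he : S = (fun x : ℝ => x ^ (-(1/2):ℝ)) ∘ (fun x : ℝ => Real.cosh (2*x)) := rfl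
    rw [he]
    exact this
  have h3 : Tendsto (fun x => c * S x) atTop (nhds (c * 0)) := h2.const_mul c
  simpa [funext Q_eq] using h3

lemma Q_tendsto_atBot : Tendsto Q atBot (nhds 0) := by
  have h := Q_tendsto_atTop.comp tendsto_neg_atBot_atTop
  simpa [Function.comp_def, Q_even] using h


lemma S_zero : S 0 = 1 := by rw [S]; norm_num

lemma Q_zero : Q 0 = c := by rw [Q_eq, S_zero, mul_one]

lemma Qd_zero : Qd 0 = 0 := by rw [Qd]; norm_num

lemma scalar_lip {a b : ℝ} (ha : |a| ≤ 2) (hb : |b| ≤ 2) :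
    |(a - a^5) - (b - b^5)| ≤ 81 * |a - b| := by
  have h : (a - a^5) - (b - b^5) = (a-b) * (1 - (a^4 + a^3*b + a^2*b^2 + a*b^3 + b^4)) := by
    ring
  rw [h, abs_mul]
  obtain ⟨ha1, ha2⟩ := abs_le.mp ha
  obtain ⟨hb1, hb2⟩ := abs_le.mp hb
  have haa : a^2 ≤ 4 := by nlinarith
  have hbb : b^2 ≤ 4 := by nlinarith
  have hab1 : -4 ≤ a*b := by nlinarith [sq_nonneg (a+b)]
  have hab2 : a*b ≤ 4 := by nlinarith [sq_nonneg (a-b)]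
  have h2 : |1 - (a^4 + a^3*b + a^2*b^2 + a*b^3 + b^4)| ≤ 81 := by
    rw [abs_le]
    constructor <;>
      nlinarith [mul_nonneg (sub_nonneg.2 hab2) (add_nonneg (sq_nonneg a) (sq_nonneg b)),
        mul_nonneg (by linarith : (0:ℝ) ≤ a*b + 4) (add_nonneg (sq_nonneg a) (sq_nonneg b)),
        mul_nonneg (sub_nonneg.2 haa) (sub_nonneg.2 hbb),
        mul_nonneg (sub_nonneg.2 haa) (add_nonneg (sq_nonneg a) (sq_nonneg b)),
        mul_nonneg (sub_nonneg.2 hbb) (add_nonneg (sq_nonneg a) (sq_nonneg b)),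
        sq_nonneg (a*b), sq_nonneg (a^2), sq_nonneg (b^2), sq_nonneg a, sq_nonneg b]
  calc |a-b| * |1 - (a^4 + a^3*b + a^2*b^2 + a*b^3 + b^4)| ≤ |a-b| * 81 :=
        mul_le_mul_of_nonneg_left h2 (abs_nonneg _)
    _ = 81 * |a-b| := by ring

lemma lip (t : ℝ) :
    LipschitzOnWith 81 (fun p : ℝ × ℝ => (p.2, p.1 - p.1^5)) {p : ℝ × ℝ | |p.1| ≤ 2} := by
  apply LipschitzOnWith.of_dist_le_mul
  intro p hp q hq
  simp only [Set.mem_setOf_eq] at hp hq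
  have hK : ((81: NNReal) : ℝ) = 81 := rfl
  rw [hK, Prod.dist_eq]
  have hd0 : (0:ℝ) ≤ dist p q := dist_nonneg
  have hM1 : dist p.1 q.1 ≤ dist p q := by rw [Prod.dist_eq]; exact le_max_left _ _
  have hM2 : dist p.2 q.2 ≤ dist p q := by rw [Prod.dist_eq]; exact le_max_right _ _
  apply max_le
  · linarith
  · have h := scalar_lip hp hq
    have h1 : dist (p.1 - p.1^5) (q.1 - q.1^5) = |(p.1 - p.1^5) - (q.1 - q.1^5)| :=
      Real.dist_eq _ _
    have h3 := hM1
    rw [Real.dist_eq] at h3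
    rw [h1]
    linarith

lemma uniqueness (φ : ℝ → ℝ) (hφ : ContDiff ℝ 2 φ) (hpos : ∀ x, 0 < φ x)
    (htop : Tendsto φ atTop (nhds 0)) (hbot : Tendsto φ atBot (nhds 0))
    (hode : ∀ x, -iteratedDeriv 2 φ x + φ x - φ x ^ 5 = 0) :
    ∃ x₀ : ℝ, ∀ x, φ x = Q (x - x₀) := by
  -- regularity
  have hφ2 : ContDiff ℝ ((1:WithTop ℕ∞) + 1) φ := by
    have h12 : ((1:WithTop ℕ∞) + 1) = 2 := by norm_num
    rw [h12]; exact_mod_cast hφ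
  have hφd : Differentiable ℝ φ := hφ2.differentiable (by norm_num)
  have hd1 : ContDiff ℝ (1 : WithTop ℕ∞) (deriv φ) := (contDiff_succ_iff_deriv.mp hφ2).2.2
  have hφ'd : Differentiable ℝ (deriv φ) := hd1.differentiable one_ne_zero
  have hφ'c : Continuous (deriv φ) := hφ'd.continuous
  have hode' : ∀ x, deriv (deriv φ) x = φ x - φ x ^ 5 := by
    intro x
    have h := hode x
    rw [show (2:ℕ) = 1 + 1 from rfl, iteratedDeriv_succ, iteratedDeriv_one] at h
    linarith
  -- energy
  have hEder : ∀ x, HasDerivAt (fun x => (deriv φ x)^2 - (φ x)^2 + (φ x)^6/3) 0 x := by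
    intro x
    have h1 : HasDerivAt (deriv φ) (φ x - φ x^5) x := by
      have := (hφ'd x).hasDerivAt
      rwa [hode' x] at this
    have h2 : HasDerivAt φ (deriv φ x) x := (hφd x).hasDerivAt
    have h3 := ((h1.pow 2).sub (h2.pow 2)).add ((h2.pow 6).div_const 3)
    refine h3.congr_deriv ?_
    push_cast
    ring
  obtain ⟨C, hC⟩ : ∃ C, ∀ x, (deriv φ x)^2 - (φ x)^2 + (φ x)^6/3 = C :=
    ⟨_, fun x => is_const_of_deriv_eq_zero
      (fun y => (hEder y).differentiableAt) (fun y => (hEder y).deriv) x 0⟩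
  have hEx : ∀ x, (deriv φ x)^2 = C + (φ x)^2 - (φ x)^6/3 := fun x => by linarith [hC x]
  -- limit of (deriv φ)^2
  have hlim2 : Tendsto (fun x => (deriv φ x)^2) atTop (nhds C) := by
    have h1 : Tendsto (fun x => C + (φ x)^2 - (φ x)^6/3) atTop (nhds (C + 0^2 - 0^6/3)) :=
      (tendsto_const_nhds.add (htop.pow 2)).sub ((htop.pow 6).div_const 3)
    norm_num at h1
    exact Filter.Tendsto.congr (fun x => (hEx x).symm) h1
  have hCnonneg : 0 ≤ C := ge_of_tendsto' hlim2 (fun x => sq_nonneg _)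
  -- C = 0
  have hC0 : C = 0 := by
    by_contra hne
    have hCpos : 0 < C := hCnonneg.lt_of_ne (Ne.symm hne)
    set s := Real.sqrt (C/2) with hs
    have hspos : 0 < s := Real.sqrt_pos.mpr (by linarith)
    have hev : ∀ᶠ x in atTop, C/2 < (deriv φ x)^2 :=
      hlim2.eventually (eventually_gt_nhds (by linarith))
    obtain ⟨A, hA⟩ := eventually_atTop.mp hev
    have hne0 : ∀ x, A ≤ x → deriv φ x ≠ 0 := by
      intro x hx h0
      have := hA x hx
      rw [h0] at this
      norm_num at this
      linarith
    have habs : ∀ x, A ≤ x → s ≤ |deriv φ x| := by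
      intro x hx
      calc s = Real.sqrt (C/2) := hs
        _ ≤ Real.sqrt ((deriv φ x)^2) := Real.sqrt_le_sqrt (hA x hx).le
        _ = |deriv φ x| := Real.sqrt_sq_eq_abs _
    rcases (hne0 A le_rfl).lt_or_gt with hneg | hposA
    · -- derivative negative on the ray, φ goes to -∞
      have hallneg : ∀ x, A ≤ x → deriv φ x < 0 := by
        intro x hx
        rcases (hne0 x hx).lt_or_gt with h | h
        · exact h
        · exfalso
          obtain ⟨z, hz, hz0⟩ :=
            intermediate_value_Icc hx (hφ'c.continuousOn) ⟨hneg.le, h.le⟩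
          exact hne0 z hz.1 hz0
      have hle : ∀ x, A ≤ x → deriv φ x ≤ -s := by
        intro x hx
        have h1 := habs x hx
        rw [abs_of_neg (hallneg x hx)] at h1
        linarith
      have hanti : AntitoneOn (fun x => φ x + s * x) (Set.Ici A) := by
        apply antitoneOn_of_deriv_nonpos (convex_Ici A)
        · exact (hφd.continuous.add (continuous_const.mul continuous_id)).continuousOn
        · exact (hφd.add ((differentiable_id.const_mul s))).differentiableOn
        · intro x hx
          rw [interior_Ici] at hx
          have hdd : HasDerivAt (fun x => φ x + s * x) (deriv φ x + s) x := by
            have := (hφd x).hasDerivAt.add ((hasDerivAt_id x).const_mul s)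
            simp at this; exact this
          have hdx := hdd.deriv
          rw [hdx]
          linarith [hle x hx.le]
      set B := max A ((φ A + s*A)/s) + 1 with hB
      have hB1 : A ≤ B := le_trans (le_max_left _ _) (by rw [hB]; linarith)
      have h2 := hanti (Set.self_mem_Ici) (Set.mem_Ici.mpr hB1) hB1
      simp only [] at h2
      have hBbig : (φ A + s*A)/s < B := lt_of_le_of_lt (le_max_right _ _) (by rw [hB]; linarith)
      rw [div_lt_iff₀ hspos] at hBbig
      have := hpos B
      linarith
    · -- derivative positive on the ray, φ goes to +∞
      have hallpos : ∀ x, A ≤ x → 0 < deriv φ x := by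
        intro x hx
        rcases (hne0 x hx).lt_or_gt with h | h
        · exfalso
          obtain ⟨z, hz, hz0⟩ :=
            intermediate_value_Icc' hx (hφ'c.continuousOn) ⟨h.le, hposA.le⟩
          exact hne0 z hz.1 hz0
        · exact h
      have hge : ∀ x, A ≤ x → s ≤ deriv φ x := by
        intro x hx
        have h1 := habs x hx
        rw [abs_of_pos (hallpos x hx)] at h1
        linarith
      have hmono : MonotoneOn (fun x => φ x - s * x) (Set.Ici A) := by
        apply monotoneOn_of_deriv_nonneg (convex_Ici A)
        · exact (hφd.continuous.sub (continuous_const.mul continuous_id)).continuousOn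
        · exact (hφd.sub ((differentiable_id.const_mul s))).differentiableOn
        · intro x hx
          rw [interior_Ici] at hx
          have hdd : HasDerivAt (fun x => φ x - s * x) (deriv φ x - s) x := by
            have := (hφd x).hasDerivAt.sub ((hasDerivAt_id x).const_mul s)
            simp at this; exact this
          have hdx := hdd.deriv
          rw [hdx]
          linarith [hge x hx.le]
      obtain ⟨B₀, hB₀⟩ := eventually_atTop.mp (htop.eventually (eventually_lt_nhds one_pos))
      set X := max (max A B₀) ((1 - φ A + s*A)/s + 1) with hX
      have hXA : A ≤ X := le_trans (le_trans (le_max_left _ _) (le_max_left _ _)) le_rfl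
      have hXB : B₀ ≤ X := le_trans (le_max_right _ _) (le_max_left _ _)
      have hXs : (1 - φ A + s*A)/s < X := lt_of_lt_of_le (by linarith) (le_max_right _ _)
      rw [div_lt_iff₀ hspos] at hXs
      have h2 := hmono (Set.self_mem_Ici) (Set.mem_Ici.mpr hXA) hXA
      simp only [] at h2
      have h3 := hB₀ X hXB
      linarith
  -- bounds on φ
  have hphi4 : ∀ x, φ x ^ 4 ≤ 3 := by
    intro x
    have h := hEx x
    rw [hC0] at h
    nlinarith [sq_nonneg (deriv φ x), hpos x, mul_pos (hpos x) (hpos x), sq_nonneg (φ x)]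
  have hphile2 : ∀ x, |φ x| ≤ 2 := by
    intro x
    rw [abs_of_pos (hpos x)]
    by_contra hgt
    push_neg at hgt
    have ha : 4 < φ x ^ 2 := by nlinarith
    nlinarith [hphi4 x, ha]
  -- maximum point
  have hevmax : ∀ᶠ x in cocompact ℝ, φ x ≤ φ 0 := by
    rw [cocompact_eq_atBot_atTop, eventually_sup]
    exact ⟨(hbot.eventually (eventually_lt_nhds (hpos 0))).mono (fun x hx => hx.le),
      (htop.eventually (eventually_lt_nhds (hpos 0))).mono (fun x hx => hx.le)⟩
  obtain ⟨x₀, hx₀⟩ := hφd.continuous.exists_forall_ge' 0 hevmax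
  have hd0 : deriv φ x₀ = 0 :=
    IsLocalMax.deriv_eq_zero (Filter.Eventually.of_forall (fun y => hx₀ y))
  have hval4 : φ x₀ ^ 4 = 3 := by
    have h := hEx x₀
    rw [hC0, hd0] at h
    nlinarith [hpos x₀, mul_pos (hpos x₀) (hpos x₀)]
  have hval : φ x₀ = c := by
    have h1 : ((φ x₀)^(4:ℕ) : ℝ) ^ ((1:ℝ)/4) = φ x₀ := by
      rw [← Real.rpow_natCast (φ x₀) 4, ← Real.rpow_mul (hpos x₀).le]
      norm_num
    rw [hval4] at h1
    have hcc : c = (3:ℝ) ^ ((1:ℝ)/4) := rfl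
    rw [hcc]
    exact h1.symm
  -- ODE uniqueness
  refine ⟨x₀, fun x => ?_⟩
  set T := |x - x₀| + 1 with hT
  have hTpos : 0 < T := by positivity
  have hmem : x - x₀ ∈ Set.Ioo (-T) T := by
    constructor
    · rw [hT]; nlinarith [abs_nonneg (x - x₀), neg_abs_le (x - x₀)]
    · rw [hT]; nlinarith [le_abs_self (x - x₀)]
  have h0mem : (0:ℝ) ∈ Set.Ioo (-T) T := ⟨by linarith, hTpos⟩
  have hf : ∀ t ∈ Set.Ioo (-T) T,
      HasDerivAt (fun t => (φ (t + x₀), deriv φ (t + x₀)))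
        ((fun (_ : ℝ) (p : ℝ × ℝ) => (p.2, p.1 - p.1^5)) t (φ (t + x₀), deriv φ (t + x₀))) t ∧
      (φ (t + x₀), deriv φ (t + x₀)) ∈ {p : ℝ × ℝ | |p.1| ≤ 2} := by
    intro t _
    constructor
    · have c1 : HasDerivAt (fun t => φ (t + x₀)) (deriv φ (t + x₀)) t := by
        have h := ((hφd (t+x₀)).hasDerivAt).comp t ((hasDerivAt_id t).add_const x₀)
        simp at h; exact h
      have c2 : HasDerivAt (fun t => deriv φ (t + x₀)) (φ (t+x₀) - φ (t+x₀)^5) t := by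
        have h := ((hφ'd (t+x₀)).hasDerivAt).comp t ((hasDerivAt_id t).add_const x₀)
        simp [hode'] at h; exact h
      exact c1.prodMk c2
    · exact hphile2 _
  have hg : ∀ t ∈ Set.Ioo (-T) T,
      HasDerivAt (fun t => (Q t, Qd t))
        ((fun (_ : ℝ) (p : ℝ × ℝ) => (p.2, p.1 - p.1^5)) t (Q t, Qd t)) t ∧
      (Q t, Qd t) ∈ {p : ℝ × ℝ | |p.1| ≤ 2} := by
    intro t _
    refine ⟨(hasDerivAt_Q t).prodMk (hasDerivAt_Qd t), ?_⟩
    have := Q_pos t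
    have := Q_le_two t
    simp only [Set.mem_setOf_eq]
    rw [abs_of_pos (Q_pos t)]
    exact Q_le_two t
  have hinit : (fun t => (φ (t + x₀), deriv φ (t + x₀))) 0 = (fun t => (Q t, Qd t)) 0 := by
    simp only [zero_add]
    rw [Q_zero, Qd_zero, hval, hd0]
  have key := ODE_solution_unique_of_mem_Ioo (fun t _ => lip t) h0mem hf hg hinit hmem
  have key1 := congrArg Prod.fst key
  simpa using key1

end QAux

/-- `Q` is smooth, positive, even, vanishes at infinity and solves `−Q'' + Q − Q⁵ = 0`;
moreover it is the unique such positive solution up to translation. -/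
theorem Q_ground_state_unique :
    ContDiff ℝ (⊤ : ℕ∞) Q ∧
    (∀ x, 0 < Q x) ∧
    (∀ x, Q (-x) = Q x) ∧
    Tendsto Q atTop (nhds 0) ∧ Tendsto Q atBot (nhds 0) ∧
    (∀ x, -iteratedDeriv 2 Q x + Q x - Q x ^ 5 = 0) ∧
    (∀ φ : ℝ → ℝ, ContDiff ℝ 2 φ → (∀ x, 0 < φ x) →
      Tendsto φ atTop (nhds 0) → Tendsto φ atBot (nhds 0) →
      (∀ x, -iteratedDeriv 2 φ x + φ x - φ x ^ 5 = 0) →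
      ∃ x₀ : ℝ, ∀ x, φ x = Q (x - x₀)) := by
  refine ⟨QAux.contDiff_Q, QAux.Q_pos, QAux.Q_even, QAux.Q_tendsto_atTop, QAux.Q_tendsto_atBot,
    ?_, QAux.uniqueness⟩
  intro x
  have h1 : deriv Q = QAux.Qd := funext fun y => (QAux.hasDerivAt_Q y).deriv
  rw [show (2:ℕ) = 1 + 1 from rfl, iteratedDeriv_succ, iteratedDeriv_one, h1,
    (QAux.hasDerivAt_Qd x).deriv]
  ring
end

section
/- Characterization of the kernel of the linearized operator: if f : ℝ → ℝ is twice continuously differentiable, f ∈ L²(ℝ), and Lf = 0 pointwise on ℝ (i.e. −f'' + f − 5Q⁴ f = 0), then there exists a ∈ ℝ such that f = a Q'. -/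
open MeasureTheory Real Set Filter

noncomputable def Qp (x : ℝ) : ℝ :=
  -((3:ℝ) ^ (1/4:ℝ)) * Real.sinh (2*x) * Real.cosh (2*x) ^ (-(3/2) : ℝ)

lemma cosh_pos' (x : ℝ) : (0:ℝ) < Real.cosh (2*x) := Real.cosh_pos _

lemma Q_eq (x : ℝ) : Q x = (3:ℝ) ^ (1/4:ℝ) * Real.cosh (2*x) ^ (-(1/2) : ℝ) := by
  have hc := cosh_pos' x
  have h1 : (Real.cosh (2*x))⁻¹ ^ 2 = Real.cosh (2*x) ^ ((-2 : ℝ)) := by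
    rw [inv_pow, Real.rpow_neg hc.le, ← Real.rpow_natCast (Real.cosh (2*x)) 2]
    norm_num
  rw [Q, h1, Real.mul_rpow (by norm_num) (Real.rpow_nonneg hc.le _),
    ← Real.rpow_mul hc.le]
  norm_num

lemma hasDerivAt_cosh2 (x : ℝ) :
    HasDerivAt (fun x => Real.cosh (2*x)) (Real.sinh (2*x) * 2) x :=
  (Real.hasDerivAt_cosh (2*x)).comp x (by simpa using (hasDerivAt_id x).const_mul 2)

lemma rpow_sub_cast (c : ℝ) (hc : 0 < c) (p q : ℝ) : c ^ (p - q) = c ^ p / c ^ q :=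
  Real.rpow_sub hc p q

lemma hasDerivAt_Q (x : ℝ) : HasDerivAt Q (Qp x) x := by
  have hc := cosh_pos' x
  have h : HasDerivAt (fun x => (3:ℝ) ^ (1/4:ℝ) * Real.cosh (2*x) ^ (-(1/2) : ℝ))
      ((3:ℝ) ^ (1/4:ℝ) * (Real.sinh (2*x) * 2 * (-(1/2)) * Real.cosh (2*x) ^ ((-(1/2)) - 1 : ℝ))) x :=
    ((hasDerivAt_cosh2 x).rpow_const (Or.inl hc.ne')).const_mul _
  have hQ : Q = fun x => (3:ℝ) ^ (1/4:ℝ) * Real.cosh (2*x) ^ (-(1/2) : ℝ) := funext Q_eq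
  rw [hQ, Qp]
  convert h using 1
  have : ((-(1/2)) - 1 : ℝ) = (-(3/2) : ℝ) := by norm_num
  rw [this]; ring

lemma Q_pow5 (x : ℝ) :
    Q x ^ 5 = 3 * (3:ℝ) ^ (1/4:ℝ) * Real.cosh (2*x) ^ (-(5/2) : ℝ) := by
  have hc := cosh_pos' x
  rw [Q_eq, mul_pow, ← Real.rpow_natCast (Real.cosh (2*x) ^ (-(1/2):ℝ)) 5,
    ← Real.rpow_natCast ((3:ℝ) ^ (1/4:ℝ)) 5, ← Real.rpow_mul hc.le,
    ← Real.rpow_mul (by norm_num : (0:ℝ) ≤ 3)]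
  rw [show ((1/4:ℝ) * (5:ℕ)) = 1 + (1/4:ℝ) by push_cast; norm_num,
    Real.rpow_add (by norm_num : (0:ℝ) < 3), Real.rpow_one]
  norm_num

lemma hasDerivAt_Qp (x : ℝ) : HasDerivAt Qp (Q x - Q x ^ 5) x := by
  have hc := cosh_pos' x
  have hs : HasDerivAt (fun x => Real.sinh (2*x)) (Real.cosh (2*x) * 2) x :=
    (Real.hasDerivAt_sinh (2*x)).comp x (by simpa using (hasDerivAt_id x).const_mul 2)
  have h2 : HasDerivAt (fun x => Real.cosh (2*x) ^ (-(3/2) : ℝ))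
      (Real.sinh (2*x) * 2 * (-(3/2)) * Real.cosh (2*x) ^ ((-(3/2)) - 1 : ℝ)) x :=
    (hasDerivAt_cosh2 x).rpow_const (Or.inl hc.ne')
  have h : HasDerivAt Qp
      ((-((3:ℝ)^(1/4:ℝ)) * (Real.cosh (2*x) * 2)) * Real.cosh (2*x) ^ (-(3/2):ℝ)
        + (-((3:ℝ)^(1/4:ℝ)) * Real.sinh (2*x)) *
          (Real.sinh (2*x) * 2 * (-(3/2)) * Real.cosh (2*x) ^ ((-(3/2)) - 1 : ℝ))) x := by
    have := ((hs.const_mul (-((3:ℝ)^(1/4:ℝ)))).mul h2)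
    exact this
  convert h using 1
  set c := Real.cosh (2*x) with hcdef
  set s := Real.sinh (2*x) with hsdef
  set k := (3:ℝ)^(1/4:ℝ) with hkdef
  have h52 : c ^ ((-(3/2):ℝ) - 1) = c ^ (-(5/2):ℝ) := by norm_num
  have h32 : c * c ^ (-(3/2):ℝ) = c ^ (-(1/2):ℝ) := by
    rw [show (-(1/2):ℝ) = 1 + (-(3/2)) by norm_num, Real.rpow_add hc, Real.rpow_one]
  have h12 : c^2 * c ^ (-(5/2):ℝ) = c ^ (-(1/2):ℝ) := by
    rw [← Real.rpow_natCast c 2, ← Real.rpow_add hc]; norm_num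
  have hsq : s^2 = c^2 - 1 := by
    rw [hsdef, hcdef]; exact Real.sinh_sq (2*x)
  rw [h52, Q_pow5, Q_eq]
  have expand : (-k * (c*2)) * c ^ (-(3/2):ℝ) + (-k*s) * (s*2*(-(3/2)) * c ^ (-(5/2):ℝ))
      = -2*k*(c * c ^ (-(3/2):ℝ)) + 3*k*(s^2 * c ^ (-(5/2):ℝ)) := by ring
  rw [expand, h32, hsq, show (c^2 - 1) * c ^ (-(5/2):ℝ)
    = c^2 * c ^ (-(5/2):ℝ) - c ^ (-(5/2):ℝ) by ring, h12]
  ring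

lemma Qp_zero : Qp 0 = 0 := by simp [Qp]

lemma Qp_neg_of_pos {t : ℝ} (ht : 0 < t) : Qp t < 0 := by
  have h1 : (0:ℝ) < (3:ℝ)^(1/4:ℝ) := Real.rpow_pos_of_pos (by norm_num) _
  have h2 : 0 < Real.sinh (2*t) := by positivity
  have h3 : (0:ℝ) < Real.cosh (2*t) ^ (-(3/2):ℝ) := Real.rpow_pos_of_pos (cosh_pos' t) _
  rw [Qp]
  nlinarith [mul_pos (mul_pos h1 h2) h3]

lemma cosh_le_exp' {t : ℝ} (ht : 0 ≤ t) : Real.cosh (2*t) ≤ Real.exp (2*t) := by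
  rw [Real.cosh_eq]
  have h1 : Real.exp (-(2*t)) ≤ Real.exp (2*t) := Real.exp_le_exp.2 (by linarith)
  linarith

lemma exp_le_two_cosh (t : ℝ) : Real.exp (2*t) ≤ 2 * Real.cosh (2*t) := by
  rw [Real.cosh_eq]
  have := (Real.exp_pos (-(2*t))).le
  linarith

lemma Qp_sq_le {t : ℝ} (ht : 1 ≤ t) : Qp t ^ 2 ≤ 4 * Real.exp (-(2*t)) := by
  have hc := cosh_pos' t
  have ht0 : (0:ℝ) ≤ t := by linarith
  set c := Real.cosh (2*t) with hcdef
  set s := Real.sinh (2*t) with hsdef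
  have hsq : s^2 = c^2 - 1 := Real.sinh_sq (2*t)
  have h1 : Qp t ^ 2 = ((3:ℝ)^(1/4:ℝ))^2 * s^2 * (c ^ (-(3/2):ℝ))^2 := by
    rw [Qp]; ring
  have hk4 : ((3:ℝ)^(1/4:ℝ))^4 = 3 := by
    rw [← Real.rpow_natCast ((3:ℝ)^(1/4:ℝ)) 4, ← Real.rpow_mul (by norm_num)]
    norm_num
  have hkpos : (0:ℝ) < (3:ℝ)^(1/4:ℝ) := Real.rpow_pos_of_pos (by norm_num) _
  have h2 : ((3:ℝ)^(1/4:ℝ))^2 ≤ 2 := by nlinarith [hk4, sq_nonneg (((3:ℝ)^(1/4:ℝ))^2 - 2), sq_nonneg ((3:ℝ)^(1/4:ℝ))]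
  have h3 : (c ^ (-(3/2):ℝ))^2 = c ^ ((-3:ℝ)) := by
    rw [← Real.rpow_natCast (c ^ (-(3/2):ℝ)) 2, ← Real.rpow_mul hc.le]
    norm_num
  have h4 : c^2 * c ^ ((-3:ℝ)) = c⁻¹ := by
    rw [← Real.rpow_natCast c 2, ← Real.rpow_add hc, ← Real.rpow_neg_one c]
    norm_num
  have h5 : c⁻¹ ≤ 2 * Real.exp (-(2*t)) := by
    rw [Real.exp_neg]
    have h := exp_le_two_cosh t
    calc c⁻¹ ≤ (Real.exp (2*t) / 2)⁻¹ := by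
          apply inv_anti₀ (by positivity) (by linarith)
      _ = 2 * (Real.exp (2*t))⁻¹ := by rw [inv_div]; ring
  have hs2 : s^2 ≤ c^2 := by nlinarith [hsq]
  have hmain : ((3:ℝ)^(1/4:ℝ))^2 * s^2 ≤ 2 * c^2 := by
    have := mul_le_mul_of_nonneg_right h2 (sq_nonneg s)
    nlinarith
  have hc3 : (0:ℝ) < c ^ ((-3:ℝ)) := Real.rpow_pos_of_pos hc _
  calc Qp t ^ 2 = ((3:ℝ)^(1/4:ℝ))^2 * s^2 * (c ^ (-(3/2):ℝ))^2 := h1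
    _ = ((3:ℝ)^(1/4:ℝ))^2 * s^2 * c ^ ((-3:ℝ)) := by rw [h3]
    _ ≤ 2 * c^2 * c ^ ((-3:ℝ)) := by nlinarith [hmain, hc3]
    _ = 2 * c⁻¹ := by rw [mul_assoc, h4]
    _ ≤ 4 * Real.exp (-(2*t)) := by linarith

lemma Qp_le_neg {t : ℝ} (ht : 1 ≤ t) : Qp t ≤ -(Real.exp (-t) / 4) := by
  have hc := cosh_pos' t
  have ht0 : (0:ℝ) ≤ t := by linarith
  set c := Real.cosh (2*t) with hcdef
  set s := Real.sinh (2*t) with hsdef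
  have hk1 : (1:ℝ) ≤ (3:ℝ)^(1/4:ℝ) := by
    have := Real.rpow_le_rpow (by norm_num : (0:ℝ) ≤ 1) (by norm_num : (1:ℝ) ≤ 3)
      (by norm_num : (0:ℝ) ≤ (1/4:ℝ))
    rwa [Real.one_rpow] at this
  have he2 : (2:ℝ) ≤ Real.exp (2*t) := by
    have := Real.add_one_le_exp (2*t)
    linarith
  have hen : Real.exp (-(2*t)) ≤ 1 := Real.exp_le_one_iff.2 (by linarith)
  have hs4 : Real.exp (2*t)/4 ≤ s := by
    rw [hsdef, Real.sinh_eq]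
    have : Real.exp (-(2*t)) ≤ Real.exp (2*t) / 2 := by linarith
    linarith
  have hc32 : Real.exp (-(3*t)) ≤ c ^ (-(3/2):ℝ) := by
    have h1 : c ^ ((3/2):ℝ) ≤ Real.exp (3*t) := by
      have h2 : c ^ ((3/2):ℝ) ≤ (Real.exp (2*t)) ^ ((3/2):ℝ) :=
        Real.rpow_le_rpow hc.le (cosh_le_exp' ht0) (by norm_num)
      have h3 : (Real.exp (2*t)) ^ ((3/2):ℝ) = Real.exp (3*t) := by
        rw [← Real.exp_mul]; ring_nf
      linarith [h2, h3.le]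
    have h4 : c ^ (-(3/2):ℝ) = (c ^ ((3/2):ℝ))⁻¹ := by
      rw [← Real.rpow_neg hc.le]
    rw [h4, Real.exp_neg]
    exact inv_anti₀ (Real.rpow_pos_of_pos hc _) h1
  have hcppos : (0:ℝ) < c ^ (-(3/2):ℝ) := Real.rpow_pos_of_pos hc _
  have hspos : (0:ℝ) < s := by positivity
  have hmul : Real.exp (2*t)/4 * Real.exp (-(3*t)) ≤ s * c ^ (-(3/2):ℝ) :=
    mul_le_mul hs4 hc32 (by positivity) hspos.le
  have hone : s * c ^ (-(3/2):ℝ) ≤ (3:ℝ)^(1/4:ℝ) * (s * c ^ (-(3/2):ℝ)) :=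
    le_mul_of_one_le_left (by positivity) hk1
  have hval : Real.exp (2*t)/4 * Real.exp (-(3*t)) = Real.exp (-t)/4 := by
    rw [div_mul_eq_mul_div, ← Real.exp_add, show 2*t + -(3*t) = -t by ring]
  rw [Qp]
  nlinarith [hmul, hone, hval]

lemma Q_pow4 (x : ℝ) : Q x ^ 4 = 3 * (Real.cosh (2*x) ^ 2)⁻¹ := by
  have hc := cosh_pos' x
  rw [Q_eq, mul_pow, ← Real.rpow_natCast (Real.cosh (2*x) ^ (-(1/2):ℝ)) 4,
    ← Real.rpow_natCast ((3:ℝ) ^ (1/4:ℝ)) 4, ← Real.rpow_mul hc.le,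
    ← Real.rpow_mul (by norm_num : (0:ℝ) ≤ 3)]
  rw [show ((1/4:ℝ) * (4:ℕ)) = (1:ℝ) by push_cast; norm_num,
    show ((-(1/2):ℝ) * (4:ℕ)) = (-2:ℝ) by push_cast; norm_num, Real.rpow_one,
    Real.rpow_neg hc.le, ← Real.rpow_natCast (Real.cosh (2*x)) 2]
  norm_num

lemma Q_pow4_pos (x : ℝ) : 0 < Q x ^ 4 := by
  rw [Q_pow4]; positivity

lemma Q_pow4_le (x : ℝ) : Q x ^ 4 ≤ 3 := by
  rw [Q_pow4]
  have h1 : (1:ℝ) ≤ Real.cosh (2*x) := Real.one_le_cosh _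
  have h2 : (1:ℝ) ≤ Real.cosh (2*x) ^ 2 := by nlinarith
  have h3 : (Real.cosh (2*x) ^ 2)⁻¹ ≤ 1 := by
    rw [inv_le_one_iff₀]; right; exact h2
  linarith

lemma coeff_abs_le (x : ℝ) : |1 - 5 * Q x ^ 4| ≤ 16 := by
  have h1 := Q_pow4_pos x
  have h2 := Q_pow4_le x
  rw [abs_le]; constructor <;> nlinarith

lemma Q_zero : Q 0 = (3:ℝ) ^ (1/4:ℝ) := by
  rw [Q]; norm_num

lemma Qpp_zero : Q 0 - Q 0 ^ 5 = -2 * (3:ℝ) ^ (1/4:ℝ) := by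
  have h5 := Q_pow5 0
  simp only [mul_zero, Real.cosh_zero, Real.one_rpow, mul_one] at h5
  rw [Q_zero] at h5 ⊢; rw [h5]; ring

lemma Qpp_zero_ne : Q 0 - Q 0 ^ 5 ≠ 0 := by
  rw [Qpp_zero]
  have : (0:ℝ) < (3:ℝ)^(1/4:ℝ) := Real.rpow_pos_of_pos (by norm_num) _
  nlinarith

lemma hQpp' (y : ℝ) : HasDerivAt (fun y => Q y - Q y ^ 5) (Qp y - 5 * Q y ^ 4 * Qp y) y := by
  have h := (hasDerivAt_Q y).sub ((hasDerivAt_Q y).pow 5)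
  exact h.congr_deriv (by norm_num)

lemma hasDerivAt_exp8 (t : ℝ) :
    HasDerivAt (fun t => Real.exp (2*t)/8) (Real.exp (2*t)/4) t := by
  have h := ((Real.hasDerivAt_exp (2*t)).comp t
    (by simpa using (hasDerivAt_id t).const_mul 2)).div_const 8
  exact h.congr_deriv (by ring)

lemma integral_exp_two (x : ℝ) :
    ∫ t in (1:ℝ)..x, Real.exp (2*t)/4 = Real.exp (2*x)/8 - Real.exp 2/8 := by
  rw [intervalIntegral.integral_eq_sub_of_hasDerivAt (fun t _ => hasDerivAt_exp8 t)
    ((by continuity : Continuous (fun t : ℝ => Real.exp (2*t)/4)).intervalIntegrable _ _)]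
  norm_num

lemma wronskian_nonzero_contradiction (f : ℝ → ℝ) (c0 : ℝ)
    (hf1 : ∀ y, HasDerivAt f (deriv f y) y)
    (hf2 : ∀ y, HasDerivAt (deriv f) ((1 - 5 * Q y ^ 4) * f y) y)
    (hL2 : Integrable (fun x => f x ^ 2))
    (hW : ∀ y, f y * (Q y - Q y ^ 5) - deriv f y * Qp y = c0)
    (hc0 : c0 ≠ 0) : False := by
  have habs : 0 < |c0| := abs_pos.2 hc0
  have hQpdiff : Differentiable ℝ Qp := fun x => (hasDerivAt_Qp x).differentiableAt
  have hQpcont : Continuous Qp := hQpdiff.continuous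
  set g : ℝ → ℝ := fun t => f t / Qp t with hgdef
  have hQpne : ∀ t : ℝ, 1 ≤ t → Qp t ≠ 0 := fun t ht =>
    (Qp_neg_of_pos (by linarith : (0:ℝ) < t)).ne
  have hg' : ∀ t, 1 ≤ t → HasDerivAt g (-c0 / Qp t ^ 2) t := by
    intro t ht
    have h := (hf1 t).div (hasDerivAt_Qp t) (hQpne t ht)
    refine h.congr_deriv ?_
    rw [show -c0 = deriv f t * Qp t - f t * (Q t - Q t ^ 5) by linarith [hW t]]
  have hftc : ∀ x, 1 ≤ x → g x - g 1 = -c0 * ∫ t in (1:ℝ)..x, (Qp t ^ 2)⁻¹ := by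
    intro x hx
    have hint : ∀ t ∈ uIcc (1:ℝ) x, HasDerivAt g (-c0 / Qp t ^ 2) t := by
      intro t ht
      rw [uIcc_of_le hx] at ht
      exact hg' t ht.1
    have hcont : IntervalIntegrable (fun t => -c0 / Qp t ^ 2) volume 1 x := by
      apply ContinuousOn.intervalIntegrable
      apply ContinuousOn.div continuousOn_const ((hQpcont.pow 2).continuousOn)
      intro t ht
      rw [uIcc_of_le hx] at ht
      exact pow_ne_zero 2 (hQpne t ht.1)
    have h := intervalIntegral.integral_eq_sub_of_hasDerivAt hint hcont
    simp_rw [div_eq_mul_inv] at h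
    rw [intervalIntegral.integral_const_mul] at h
    linarith [h]
  have hJlow : ∀ x, 1 ≤ x →
      (Real.exp (2*x) - Real.exp 2)/8 ≤ ∫ t in (1:ℝ)..x, (Qp t ^ 2)⁻¹ := by
    intro x hx
    have h1int : IntervalIntegrable (fun t => Real.exp (2*t)/4) volume 1 x := by
      apply Continuous.intervalIntegrable
      exact (Real.continuous_exp.comp (continuous_const.mul continuous_id)).div_const 4
    have h2int : IntervalIntegrable (fun t => (Qp t ^ 2)⁻¹) volume 1 x := by
      apply ContinuousOn.intervalIntegrable
      apply ContinuousOn.inv₀ ((hQpcont.pow 2).continuousOn)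
      intro t ht
      rw [uIcc_of_le hx] at ht
      exact pow_ne_zero 2 (hQpne t ht.1)
    have hle : ∀ t ∈ Icc (1:ℝ) x, Real.exp (2*t)/4 ≤ (Qp t ^ 2)⁻¹ := by
      intro t ht
      have h1 := Qp_sq_le ht.1
      have h2 : (0:ℝ) < Qp t ^ 2 := pow_two_pos_of_ne_zero (hQpne t ht.1)
      have h3 : (4 * Real.exp (-(2*t)))⁻¹ ≤ (Qp t ^ 2)⁻¹ := inv_anti₀ h2 h1
      have h4 : (4 * Real.exp (-(2*t)))⁻¹ = Real.exp (2*t)/4 := by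
        rw [Real.exp_neg]
        field_simp
      linarith
    have hmono := intervalIntegral.integral_mono_on hx h1int h2int hle
    rw [integral_exp_two x] at hmono
    linarith
  have hgx : ∀ x, 1 ≤ x →
      |c0| * ((Real.exp (2*x) - Real.exp 2)/8) - |g 1| ≤ |g x| := by
    intro x hx
    have h1 := hftc x hx
    have hJ0 := hJlow x hx
    have hlow0 : (0:ℝ) ≤ (Real.exp (2*x) - Real.exp 2)/8 := by
      have := Real.exp_le_exp.2 (by linarith : (2:ℝ) ≤ 2*x)
      linarith
    have hJnonneg : (0:ℝ) ≤ ∫ t in (1:ℝ)..x, (Qp t ^ 2)⁻¹ := le_trans hlow0 hJ0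
    have habsJ : |g x - g 1| = |c0| * ∫ t in (1:ℝ)..x, (Qp t ^ 2)⁻¹ := by
      rw [h1, abs_mul, abs_neg, abs_of_nonneg hJnonneg]
    have htri : |g x - g 1| ≤ |g x| + |g 1| := abs_sub _ _
    have hmul : |c0| * ((Real.exp (2*x) - Real.exp 2)/8)
        ≤ |c0| * ∫ t in (1:ℝ)..x, (Qp t ^ 2)⁻¹ :=
      mul_le_mul_of_nonneg_left hJ0 habs.le
    linarith
  have hfx : ∀ x, 1 ≤ x →
      (|c0| * ((Real.exp (2*x) - Real.exp 2)/8) - |g 1|) * (Real.exp (-x)/4) ≤ |f x| := by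
    intro x hx
    have hfeq : f x = g x * Qp x := (div_mul_cancel₀ (f x) (hQpne x hx)).symm
    have habsf : |f x| = |g x| * |Qp x| := by rw [hfeq, abs_mul]
    have hQlow : Real.exp (-x)/4 ≤ |Qp x| := by
      have h1 := Qp_le_neg hx
      have h2 : Qp x < 0 := Qp_neg_of_pos (by linarith)
      rw [abs_of_neg h2]
      linarith
    rcases le_or_gt (|c0| * ((Real.exp (2*x) - Real.exp 2)/8) - |g 1|) 0 with hA | hA
    · have h0 : (0:ℝ) ≤ |f x| := abs_nonneg _
      nlinarith [Real.exp_pos (-x)]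
    · have := mul_le_mul (hgx x hx) hQlow (by positivity) (abs_nonneg (g x))
      linarith [habsf]
  obtain ⟨Cc, hCcdef⟩ : ∃ c : ℝ, c = |c0| * Real.exp 2/32 + |g 1|/4 := ⟨_, rfl⟩
  obtain ⟨x0, hx0def⟩ : ∃ c : ℝ, c = max 1 (32*(1+|Cc|)/|c0|) := ⟨_, rfl⟩
  have hbound : ∀ x ∈ Ioi x0, (1:ℝ) ≤ f x ^ 2 := by
    intro x hx
    rw [mem_Ioi, hx0def] at hx
    have hx1 : (1:ℝ) ≤ x := le_trans (le_max_left _ _) (le_of_lt hx)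
    have hx2 : 32*(1+|Cc|)/|c0| ≤ x := le_trans (le_max_right _ _) (le_of_lt hx)
    have hf := hfx x hx1
    have hxx : Real.exp (2*x) * Real.exp (-x) = Real.exp x := by
      rw [← Real.exp_add, show 2*x + -x = x by ring]
    have hBeq : (|c0| * ((Real.exp (2*x) - Real.exp 2)/8) - |g 1|) * (Real.exp (-x)/4)
        = |c0|/32 * (Real.exp (2*x) * Real.exp (-x)) - Cc * Real.exp (-x) := by
      rw [hCcdef]
      ring
    have hexp1 : Real.exp (-x) ≤ 1 := Real.exp_le_one_iff.2 (by linarith)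
    have hCe : Cc * Real.exp (-x) ≤ |Cc| := by
      have h1 : Cc * Real.exp (-x) ≤ |Cc| * Real.exp (-x) :=
        mul_le_mul_of_nonneg_right (le_abs_self _) (Real.exp_pos _).le
      have h2 : |Cc| * Real.exp (-x) ≤ |Cc| * 1 :=
        mul_le_mul_of_nonneg_left hexp1 (abs_nonneg _)
      linarith
    have hex : x ≤ Real.exp x := by linarith [Real.add_one_le_exp x]
    have hkey : 1 + |Cc| ≤ |c0|/32 * Real.exp x := by
      have h1 : |c0|/32 * (32*(1+|Cc|)/|c0|) = 1 + |Cc| := by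
        field_simp
      have h2 : |c0|/32 * (32*(1+|Cc|)/|c0|) ≤ |c0|/32 * x :=
        mul_le_mul_of_nonneg_left hx2 (by positivity)
      have h3 : |c0|/32 * x ≤ |c0|/32 * Real.exp x :=
        mul_le_mul_of_nonneg_left hex (by positivity)
      linarith
    have h1f : (1:ℝ) ≤ |f x| := by
      rw [hBeq, hxx] at hf
      linarith
    nlinarith [sq_abs (f x)]
  have hIoi : IntegrableOn (fun x => f x ^ 2) (Ioi x0) volume := hL2.integrableOn
  have h1 : IntegrableOn (fun _ : ℝ => (1:ℝ)) (Ioi x0) volume := by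
    apply Integrable.mono' hIoi aestronglyMeasurable_const
    filter_upwards [ae_restrict_mem measurableSet_Ioi] with x hx
    rw [norm_one]
    exact hbound x hx
  rcases (integrableOn_const_iff (C := (1:ℝ))).mp h1 with h | h
  · norm_num at h
  · rw [Real.volume_Ioi] at h
    exact absurd h (by simp)

/-- Characterization of the kernel of the linearized operator `L = −∂²_y + 1 − 5Q⁴`:
any `C²`, `L²` solution of `Lf = 0` is a multiple of `Q'`. -/
theorem kernel_of_linearized_operator (f : ℝ → ℝ)
    (hreg : ContDiff ℝ 2 f)
    (hL2 : Integrable (fun x => f x ^ 2))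
    (hker : ∀ y, -iteratedDeriv 2 f y + f y - 5 * Q y ^ 4 * f y = 0) :
    ∃ a : ℝ, ∀ y, f y = a * deriv Q y := by
  have hdiff : Differentiable ℝ f := hreg.differentiable (by norm_num)
  have hf1 : ∀ y, HasDerivAt f (deriv f y) y := fun y => (hdiff y).hasDerivAt
  have hcd1 : ContDiff ℝ 1 (deriv f) := by
    have h := (contDiff_succ_iff_deriv (n := 1)).mp (by exact_mod_cast hreg)
    exact h.2.2
  have hf2 : ∀ y, HasDerivAt (deriv f) ((1 - 5 * Q y ^ 4) * f y) y := by
    intro y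
    have hd : HasDerivAt (deriv f) (deriv (deriv f) y) y :=
      ((hcd1.differentiable (by norm_num)) y).hasDerivAt
    have hval : deriv (deriv f) y = (1 - 5 * Q y ^ 4) * f y := by
      have h2 : iteratedDeriv 2 f y = deriv (deriv f) y := by
        rw [iteratedDeriv_succ, iteratedDeriv_one]
      have := hker y
      rw [h2] at this
      linarith [this]
    rwa [hval] at hd
  -- Wronskian
  set W : ℝ → ℝ := fun y => f y * (Q y - Q y ^ 5) - deriv f y * Qp y with hWdef
  have hWd : ∀ y, HasDerivAt W 0 y := by
    intro y
    have h := ((hf1 y).mul (hQpp' y)).sub ((hf2 y).mul (hasDerivAt_Qp y))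
    refine h.congr_deriv ?_
    ring
  have hWconst : ∀ y, W y = W 0 :=
    fun y => is_const_of_deriv_eq_zero (fun x => (hWd x).differentiableAt)
      (fun x => (hWd x).deriv) y 0
  by_cases hc0 : W 0 = 0
  case neg =>
    exact absurd (wronskian_nonzero_contradiction f (W 0) hf1 hf2 hL2
      (fun y => hWconst y) hc0) (fun h => h)
  case pos =>
    have hf0 : f 0 = 0 := by
      have h : f 0 * (Q 0 - Q 0 ^ 5) - deriv f 0 * Qp 0 = 0 := hc0
      rw [Qp_zero, mul_zero, sub_zero] at h
      exact (mul_eq_zero.mp h).resolve_right Qpp_zero_ne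
    set a : ℝ := deriv f 0 / (Q 0 - Q 0 ^ 5) with hadef
    refine ⟨a, fun y => ?_⟩
    -- ODE uniqueness
    set v : ℝ → ℝ × ℝ → ℝ × ℝ := fun t p => (p.2, (1 - 5 * Q t ^ 4) * p.1) with hvdef
    have hlip : ∀ t, LipschitzWith 16 (v t) := by
      intro t
      apply LipschitzWith.of_dist_le_mul
      intro p q
      rw [Prod.dist_eq, Prod.dist_eq]
      simp only [hvdef, Real.dist_eq]
      have hco := coeff_abs_le t
      have h1 : |p.2 - q.2| ≤ 16 * max |p.1 - q.1| |p.2 - q.2| := by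
        have := le_max_right |p.1 - q.1| |p.2 - q.2|
        have h0 : (0:ℝ) ≤ max |p.1 - q.1| |p.2 - q.2| :=
          le_trans (abs_nonneg _) (le_max_right _ _)
        nlinarith
      have h2 : |(1 - 5 * Q t ^ 4) * p.1 - (1 - 5 * Q t ^ 4) * q.1|
          ≤ 16 * max |p.1 - q.1| |p.2 - q.2| := by
        rw [show (1 - 5 * Q t ^ 4) * p.1 - (1 - 5 * Q t ^ 4) * q.1
          = (1 - 5 * Q t ^ 4) * (p.1 - q.1) by ring, abs_mul]
        have hm := le_max_left |p.1 - q.1| |p.2 - q.2|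
        have h0 := abs_nonneg (p.1 - q.1)
        nlinarith
      rw [max_le_iff]
      constructor
      · exact h1
      · exact h2
    set u : ℝ → ℝ × ℝ := fun t => (f t, deriv f t) with hudef
    set w : ℝ → ℝ × ℝ := fun t => (a * Qp t, a * (Q t - Q t ^ 5)) with hwdef2
    have hu : ∀ t, HasDerivAt u (v t (u t)) t := fun t => (hf1 t).prodMk (hf2 t)
    have hw : ∀ t, HasDerivAt w (v t (w t)) t := by
      intro t
      have h := ((hasDerivAt_Qp t).const_mul a).prodMk ((hQpp' t).const_mul a)
      refine h.congr_deriv ?_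
      show (a * (Q t - Q t ^ 5), a * (Qp t - 5 * Q t ^ 4 * Qp t))
        = (a * (Q t - Q t ^ 5), (1 - 5 * Q t ^ 4) * (a * Qp t))
      exact Prod.ext rfl (show a * (Qp t - 5 * Q t ^ 4 * Qp t) = (1 - 5 * Q t ^ 4) * (a * Qp t) by ring)
    have h00 : u 0 = w 0 := by
      simp only [hudef, hwdef2, Qp_zero, mul_zero, hf0, Prod.mk.injEq]
      exact ⟨trivial, (div_mul_cancel₀ _ Qpp_zero_ne).symm⟩
    have key : EqOn u w (Icc (-(|y|+1)) (|y|+1)) := by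
      apply ODE_solution_unique_of_mem_Icc (v := v) (s := fun _ => (Set.univ : Set (ℝ × ℝ)))
        (fun t _ => (hlip t).lipschitzOnWith) (t₀ := 0)
      · constructor <;> [linarith [abs_nonneg y]; linarith [abs_nonneg y]]
      · exact continuousOn_of_forall_continuousAt fun t _ => (hu t).continuousAt
      · exact fun t _ => hu t
      · exact fun t _ => trivial
      · exact continuousOn_of_forall_continuousAt fun t _ => (hw t).continuousAt
      · exact fun t _ => hw t
      · exact fun t _ => trivial
      · exact h00
    have hy : y ∈ Icc (-(|y|+1)) (|y|+1) := by
      constructor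
      · linarith [neg_abs_le y]
      · linarith [le_abs_self y]
    have := key hy
    have hfst : f y = a * Qp y := congrArg Prod.fst this
    rw [hfst, (hasDerivAt_Q y).deriv]
end

section
/- Invertibility of the linearized operator in the direction 5Q⁴: there exists a unique even function R ∈ 𝒴 such that LR = 5Q⁴ pointwise on ℝ (i.e. −R'' + R − 5Q⁴R = 5Q⁴); moreover this R satisfies ∫_ℝ Q R = −(3/4) ∫_ℝ Q. -/
open MeasureTheory Real Set Filter

open Topology

/-- The space `𝒴` of smooth functions with exponential decay of all derivatives:
`|φ^{(k)}(y)| ≤ C_k (1+|y|)^{r_k} e^{−|y|}`. -/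
def MemY (φ : ℝ → ℝ) : Prop :=
  ContDiff ℝ (⊤ : ℕ∞) φ ∧
  ∀ k : ℕ, ∃ C > (0:ℝ), ∃ r > (0:ℝ),
    ∀ y : ℝ, |iteratedDeriv k φ y| ≤ C * (1 + |y|) ^ r * Real.exp (-|y|)

noncomputable section
namespace GKdV

/-- `w x = sech(2x)^{1/2}` -/
def w (x : ℝ) : ℝ := (Real.sqrt (Real.cosh (2*x)))⁻¹
/-- `tt x = tanh(2x)` -/
def tt (x : ℝ) : ℝ := Real.sinh (2*x) / Real.cosh (2*x)
/-- `FF x = ∫₀ˣ w³` -/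
def FF (x : ℝ) : ℝ := ∫ u in (0:ℝ)..x, (w u)^3
/-- the solution -/
def RR (x : ℝ) : ℝ := -(3/2)*(w x)^4 - (3/2)*(tt x * (w x * FF x))

lemma cosh2_pos (x : ℝ) : 0 < Real.cosh (2*x) := Real.cosh_pos (2*x)
lemma S_pos (x : ℝ) : 0 < Real.sqrt (Real.cosh (2*x)) := Real.sqrt_pos.mpr (cosh2_pos x)
lemma sq_S (x : ℝ) : (Real.sqrt (Real.cosh (2*x)))^2 = Real.cosh (2*x) := Real.sq_sqrt (cosh2_pos x).le
lemma w_pos (x : ℝ) : 0 < w x := inv_pos.mpr (S_pos x)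
lemma w_sq (x : ℝ) : w x ^ 2 = (Real.cosh (2*x))⁻¹ := by
  rw [w, inv_pow, sq_S]
lemma sq_tt (x : ℝ) : tt x ^ 2 = 1 - w x ^ 4 := by
  have h := Real.cosh_sq_sub_sinh_sq (2*x)
  have h4 : w x ^ 4 = ((Real.cosh (2*x))⁻¹)^2 := by rw [← w_sq]; ring
  rw [tt, div_pow, h4]
  field_simp
  nlinarith [cosh2_pos x]

lemma one_le_S (x : ℝ) : 1 ≤ Real.sqrt (Real.cosh (2*x)) := by
  rw [show (1:ℝ) = Real.sqrt 1 by simp]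
  exact Real.sqrt_le_sqrt (Real.one_le_cosh _)
lemma w_le_one (x : ℝ) : w x ≤ 1 := by
  rw [w]
  exact inv_le_one_of_one_le₀ (one_le_S x)
lemma abs_tt_le (x : ℝ) : |tt x| ≤ 1 := by
  have h := sq_tt x
  have h2 := w_pos x
  nlinarith [sq_abs (tt x), abs_nonneg (tt x), pow_pos h2 4]

lemma exp_abs_le_two_cosh (y : ℝ) : Real.exp |y| ≤ 2 * Real.cosh y := by
  rw [Real.cosh_eq]
  rcases abs_cases y with ⟨h, _⟩ | ⟨h, _⟩ <;> rw [h] <;>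
    nlinarith [Real.exp_pos y, Real.exp_pos (-y)]

lemma w_le_exp (x : ℝ) : w x ≤ 2 * Real.exp (-|x|) := by
  have h1 : Real.exp (2*|x|) ≤ 2 * Real.cosh (2*x) := by
    have := exp_abs_le_two_cosh (2*x)
    rwa [abs_mul, abs_two] at this
  have hE : Real.exp (-|x|) ^ 2 = (Real.exp (2*|x|))⁻¹ := by
    rw [pow_two, ← Real.exp_add, ← Real.exp_neg]
    ring_nf
  have hw2 : w x ^ 2 ≤ 2 * Real.exp (-|x|) ^ 2 := by
    rw [w_sq, hE, inv_eq_one_div, inv_eq_one_div, mul_one_div, div_le_div_iff₀ (cosh2_pos x) (Real.exp_pos _)]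
    linarith [h1]
  nlinarith [w_pos x, Real.exp_pos (-|x|), sq_nonneg (w x - 2*Real.exp (-|x|)), sq_nonneg (w x + 2*Real.exp (-|x|))]


/-! ### Derivatives -/

lemma hasDerivAt_cosh2 (x : ℝ) : HasDerivAt (fun x => Real.cosh (2*x)) (2 * Real.sinh (2*x)) x := by
  have h := (Real.hasDerivAt_cosh (2*x)).comp x ((hasDerivAt_id x).const_mul 2)
  simp only [Function.comp_def, mul_one] at h
  refine h.congr_deriv (Eq.symm ?_)
  ring

lemma hasDerivAt_sinh2 (x : ℝ) : HasDerivAt (fun x => Real.sinh (2*x)) (2 * Real.cosh (2*x)) x := by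
  have h := (Real.hasDerivAt_sinh (2*x)).comp x ((hasDerivAt_id x).const_mul 2)
  simp only [Function.comp_def, mul_one] at h
  refine h.congr_deriv (Eq.symm ?_)
  ring

lemma hasDerivAt_S (x : ℝ) : HasDerivAt (fun x => Real.sqrt (Real.cosh (2*x)))
    (tt x * Real.sqrt (Real.cosh (2*x))) x := by
  have h := (Real.hasDerivAt_sqrt (cosh2_pos x).ne').comp x (hasDerivAt_cosh2 x)
  refine h.congr_deriv (Eq.symm ?_)
  rw [tt]
  field_simp
  linear_combination Real.sinh (2*x) * sq_S x

lemma hasDerivAt_w (x : ℝ) : HasDerivAt w (-(tt x * w x)) x := by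
  have h := (hasDerivAt_S x).inv (S_pos x).ne'
  refine h.congr_deriv (Eq.symm ?_)
  rw [w]
  field_simp

lemma hasDerivAt_tt (x : ℝ) : HasDerivAt tt (2 - 2 * tt x ^ 2) x := by
  have h := (hasDerivAt_sinh2 x).div (hasDerivAt_cosh2 x) (cosh2_pos x).ne'
  refine h.congr_deriv (Eq.symm ?_)
  have hc := Real.cosh_sq_sub_sinh_sq (2*x)
  rw [tt]
  field_simp

lemma continuous_w : Continuous w := by
  apply Continuous.inv₀
  · exact Real.continuous_sqrt.comp (Real.continuous_cosh.comp (continuous_const.mul continuous_id))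
  · exact fun x => (S_pos x).ne'

lemma hasDerivAt_FF (x : ℝ) : HasDerivAt FF ((w x)^3) x := by
  have hc : Continuous fun u => (w u)^3 := continuous_w.pow 3
  exact intervalIntegral.integral_hasDerivAt_right (hc.intervalIntegrable _ _)
    (hc.stronglyMeasurableAtFilter _ _) hc.continuousAt

lemma contDiff_w : ContDiff ℝ (⊤ : ℕ∞) w := by
  rw [contDiff_iff_contDiffAt]
  intro x
  have h1 : ContDiffAt ℝ (⊤ : ℕ∞) (fun x => Real.cosh (2*x)) x :=
    (Real.contDiff_cosh.comp ((contDiff_const.mul contDiff_id))).contDiffAt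
  exact ((Real.contDiffAt_sqrt (cosh2_pos x).ne').comp x h1).inv (S_pos x).ne'

lemma contDiff_tt : ContDiff ℝ (⊤ : ℕ∞) tt := by
  apply ContDiff.div
  · exact Real.contDiff_sinh.comp (contDiff_const.mul contDiff_id)
  · exact Real.contDiff_cosh.comp (contDiff_const.mul contDiff_id)
  · exact fun x => (cosh2_pos x).ne'

lemma deriv_FF : deriv FF = fun x => (w x)^3 := funext fun x => (hasDerivAt_FF x).deriv

lemma contDiff_FF : ContDiff ℝ (⊤ : ℕ∞) FF := by
  rw [contDiff_infty_iff_deriv]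
  constructor
  · exact fun x => (hasDerivAt_FF x).differentiableAt
  · rw [deriv_FF]; exact contDiff_w.pow 3

lemma contDiff_RR : ContDiff ℝ (⊤ : ℕ∞) RR := by
  apply ContDiff.sub
  · exact contDiff_const.mul (contDiff_w.pow 4)
  · exact contDiff_const.mul (contDiff_tt.mul (contDiff_w.mul contDiff_FF))


/-! ### decay machinery -/

lemma natle (n : ℕ) : (n : WithTop ℕ∞) ≤ ((⊤:ℕ∞) : WithTop ℕ∞) := by
  exact_mod_cast le_top (α := ℕ∞)

lemma abs_iteratedDeriv_eq (n : ℕ) (f : ℝ → ℝ) (x : ℝ) :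
    |iteratedDeriv n f x| = ‖iteratedFDeriv ℝ n f x‖ := by
  rw [norm_iteratedFDeriv_eq_norm_iteratedDeriv, Real.norm_eq_abs]

lemma iteratedDeriv_add' {f g : ℝ → ℝ} (hf : ContDiff ℝ (⊤:ℕ∞) f) (hg : ContDiff ℝ (⊤:ℕ∞) g)
    (n : ℕ) (x : ℝ) :
    iteratedDeriv n (fun y => f y + g y) x = iteratedDeriv n f x + iteratedDeriv n g x := by
  rw [← iteratedDerivWithin_univ, ← iteratedDerivWithin_univ, ← iteratedDerivWithin_univ]
  exact iteratedDerivWithin_add (mem_univ x) uniqueDiffOn_univ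
    ((hf.of_le (natle n)).contDiffWithinAt) ((hg.of_le (natle n)).contDiffWithinAt)

lemma iteratedDeriv_cmul {f : ℝ → ℝ} (hf : ContDiff ℝ (⊤:ℕ∞) f) (c : ℝ) (n : ℕ) (x : ℝ) :
    iteratedDeriv n (fun y => c * f y) x = c * iteratedDeriv n f x := by
  rw [← iteratedDerivWithin_univ, ← iteratedDerivWithin_univ]
  have := iteratedDerivWithin_const_smul (𝕜 := ℝ) (x := x) (s := univ) (f := f) (n := n)
    (mem_univ x) uniqueDiffOn_univ c ((hf.of_le (natle n)).contDiffWithinAt)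
  simpa [smul_eq_mul] using this

lemma exp_neg_abs_le_one (x : ℝ) : Real.exp (-|x|) ≤ 1 := by
  rw [show (1:ℝ) = Real.exp 0 by simp]
  exact Real.exp_le_exp.mpr (neg_nonpos.mpr (abs_nonneg x))

lemma iter_mul_bound {f g : ℝ → ℝ} (hf : ContDiff ℝ (⊤:ℕ∞) f) (hg : ContDiff ℝ (⊤:ℕ∞) g)
    {n : ℕ} {Cf Cg : ℝ} {τ : ℝ → ℝ} (hτ : ∀ x, 0 ≤ τ x) (hCf0 : 0 ≤ Cf) (hCg0 : 0 ≤ Cg)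
    (hCf : ∀ i ≤ n, ∀ x, |iteratedDeriv i f x| ≤ Cf * τ x)
    (hCg : ∀ i ≤ n, ∀ x, |iteratedDeriv i g x| ≤ Cg) :
    ∀ i ≤ n, ∀ x, |iteratedDeriv i (fun y => f y * g y) x| ≤ 2^n * Cf * Cg * τ x := by
  intro i hi x
  rw [abs_iteratedDeriv_eq]
  have h1 : ‖iteratedFDeriv ℝ i (fun y => f y * g y) x‖ ≤
      ∑ j ∈ Finset.range (i+1), (i.choose j : ℝ) * ‖iteratedFDeriv ℝ j f x‖ *
        ‖iteratedFDeriv ℝ (i-j) g x‖ :=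
    norm_iteratedFDeriv_mul_le hf hg x (natle i)
  have h2 : ∑ j ∈ Finset.range (i+1), (i.choose j : ℝ) * ‖iteratedFDeriv ℝ j f x‖ *
        ‖iteratedFDeriv ℝ (i-j) g x‖ ≤
      ∑ j ∈ Finset.range (i+1), (i.choose j : ℝ) * (Cf * τ x * Cg) := by
    apply Finset.sum_le_sum
    intro j hj
    have hj' : j ≤ i := Nat.lt_succ_iff.mp (Finset.mem_range.mp hj)
    have b1 : ‖iteratedFDeriv ℝ j f x‖ ≤ Cf * τ x := by
      rw [← abs_iteratedDeriv_eq]; exact hCf j (hj'.trans hi) x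
    have b2 : ‖iteratedFDeriv ℝ (i-j) g x‖ ≤ Cg := by
      rw [← abs_iteratedDeriv_eq]; exact hCg (i-j) ((Nat.sub_le i j).trans hi) x
    have := mul_le_mul b1 b2 (norm_nonneg _) (mul_nonneg hCf0 (hτ x))
    calc (i.choose j : ℝ) * ‖iteratedFDeriv ℝ j f x‖ * ‖iteratedFDeriv ℝ (i-j) g x‖
        = (i.choose j : ℝ) * (‖iteratedFDeriv ℝ j f x‖ * ‖iteratedFDeriv ℝ (i-j) g x‖) := by ring
      _ ≤ (i.choose j : ℝ) * (Cf * τ x * Cg) := by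
          apply mul_le_mul_of_nonneg_left this (Nat.cast_nonneg _)
  have h3 : ∑ j ∈ Finset.range (i+1), (i.choose j : ℝ) * (Cf * τ x * Cg)
      = 2^i * (Cf * τ x * Cg) := by
    rw [← Finset.sum_mul, ← Nat.cast_sum, Nat.sum_range_choose]
    push_cast; ring
  have h4 : (2:ℝ)^i ≤ 2^n := pow_le_pow_right₀ one_le_two hi
  have h5 : 0 ≤ Cf * τ x * Cg := mul_nonneg (mul_nonneg hCf0 (hτ x)) hCg0
  calc ‖iteratedFDeriv ℝ i (fun y => f y * g y) x‖ ≤ 2^i * (Cf * τ x * Cg) := by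
        rw [← h3]; exact h1.trans h2
    _ ≤ 2^n * (Cf * τ x * Cg) := mul_le_mul_of_nonneg_right h4 h5
    _ = 2^n * Cf * Cg * τ x := by ring

lemma wt_bounds (n : ℕ) : ∃ C : ℝ, 0 ≤ C ∧
    (∀ i ≤ n, ∀ x, |iteratedDeriv i w x| ≤ C * Real.exp (-|x|)) ∧
    (∀ i ≤ n, ∀ x, |iteratedDeriv i tt x| ≤ C) := by
  induction n with
  | zero =>
    refine ⟨2, by norm_num, ?_, ?_⟩ <;> intro i hi x <;> interval_cases i <;>
      rw [iteratedDeriv_zero]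
    · rw [abs_of_pos (w_pos x)]; exact w_le_exp x
    · exact (abs_tt_le x).trans (by norm_num)
  | succ n ih =>
    obtain ⟨C, hC0, hw, ht⟩ := ih
    have hwB : ∀ i ≤ n, ∀ x, |iteratedDeriv i w x| ≤ C := by
      intro i hi x
      exact (hw i hi x).trans (mul_le_of_le_one_right hC0 (exp_neg_abs_le_one x))
    -- bound for iteratedDeriv of (fun y => w y * ((-1) * tt y))
    have hnegt : ∀ i ≤ n, ∀ x, |iteratedDeriv i (fun y => (-1:ℝ) * tt y) x| ≤ C := by
      intro i hi x
      rw [iteratedDeriv_cmul contDiff_tt (-1) i x, abs_mul, abs_neg, abs_one, one_mul]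
      exact ht i hi x
    have hdw : ∀ i ≤ n, ∀ x, |iteratedDeriv i (fun y => w y * ((-1:ℝ) * tt y)) x| ≤
        2^n * C * C * Real.exp (-|x|) :=
      iter_mul_bound contDiff_w (contDiff_const.mul contDiff_tt)
        (fun x => (Real.exp_pos _).le) hC0 hC0 hw hnegt
    -- bound for w * w , then (w*w) * (2*(w*w))
    have hww : ∀ i ≤ n, ∀ x, |iteratedDeriv i (fun y => w y * w y) x| ≤
        2^n * C * C * Real.exp (-|x|) :=
      iter_mul_bound contDiff_w contDiff_w (fun x => (Real.exp_pos _).le) hC0 hC0 hw hwB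
    have hwwB : ∀ i ≤ n, ∀ x, |iteratedDeriv i (fun y => w y * w y) x| ≤ 2^n * C * C := by
      intro i hi x
      exact (hww i hi x).trans (mul_le_of_le_one_right (by positivity) (exp_neg_abs_le_one x))
    have h2ww : ∀ i ≤ n, ∀ x, |iteratedDeriv i (fun y => (2:ℝ) * (w y * w y)) x| ≤
        2 * (2^n * C * C) := by
      intro i hi x
      rw [iteratedDeriv_cmul (contDiff_w.mul contDiff_w) 2 i x, abs_mul, abs_two]
      have := hwwB i hi x
      linarith
    have hdt : ∀ i ≤ n, ∀ x, |iteratedDeriv i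
        (fun y => (w y * w y) * ((2:ℝ) * (w y * w y))) x| ≤
        2^n * (2^n * C * C) * (2 * (2^n * C * C)) * Real.exp (-|x|) :=
      iter_mul_bound (contDiff_w.mul contDiff_w) (contDiff_const.mul (contDiff_w.mul contDiff_w))
        (fun x => (Real.exp_pos _).le) (mul_nonneg (mul_nonneg (by positivity) hC0) hC0)
        (mul_nonneg (by norm_num) (mul_nonneg (mul_nonneg (by positivity) hC0) hC0)) hww h2ww
    refine ⟨max 2 (max C (max (2^n * C * C) (2^n * (2^n * C * C) * (2 * (2^n * C * C))))),
      by positivity, ?_, ?_⟩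
    · intro i hi x
      match i, hi with
      | 0, _ =>
        rw [iteratedDeriv_zero, abs_of_pos (w_pos x)]
        refine (w_le_exp x).trans ?_
        exact mul_le_mul_of_nonneg_right (le_max_left _ _) (Real.exp_pos _).le
      | (j+1), hj =>
        have hj' : j ≤ n := Nat.succ_le_succ_iff.mp hj
        rw [iteratedDeriv_succ']
        have hderiv : deriv w = fun y => w y * ((-1:ℝ) * tt y) := by
          funext y
          rw [(hasDerivAt_w y).deriv]; ring
        rw [hderiv]
        refine (hdw j hj' x).trans ?_
        have h6 : (2:ℝ)^n * C * C ≤ max 2 (max C (max (2^n * C * C) (2^n * (2^n * C * C) * (2 * (2^n * C * C))))) :=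
          le_trans (le_max_left _ _) (le_trans (le_max_right _ _) (le_max_right _ _))
        exact mul_le_mul_of_nonneg_right h6 (Real.exp_pos _).le
    · intro i hi x
      match i, hi with
      | 0, _ =>
        rw [iteratedDeriv_zero]
        exact (abs_tt_le x).trans (le_trans (by norm_num) (le_max_left _ _))
      | (j+1), hj =>
        have hj' : j ≤ n := Nat.succ_le_succ_iff.mp hj
        rw [iteratedDeriv_succ']
        have hderiv : deriv tt = fun y => (w y * w y) * ((2:ℝ) * (w y * w y)) := by
          funext y
          rw [(hasDerivAt_tt y).deriv, sq_tt]; ring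
        rw [hderiv]
        refine (hdt j hj' x).trans ?_
        have h6 : (2:ℝ)^n * (2^n * C * C) * (2 * (2^n * C * C)) ≤ max 2 (max C (max (2^n * C * C) (2^n * (2^n * C * C) * (2 * (2^n * C * C))))) :=
          le_trans (le_max_right _ _) (le_trans (le_max_right _ _) (le_max_right _ _))
        have h7 : (0:ℝ) ≤ 2^n * (2^n * C * C) * (2 * (2^n * C * C)) := by
          have : (0:ℝ) ≤ 2^n * C * C := mul_nonneg (mul_nonneg (by positivity) hC0) hC0
          positivity
        exact (mul_le_of_le_one_right h7 (exp_neg_abs_le_one x)).trans h6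


/-! ### FF bounds and oddness -/

lemma w_even (x : ℝ) : w (-x) = w x := by
  rw [w, w, show 2 * -x = -(2*x) by ring, Real.cosh_neg]

lemma tt_odd (x : ℝ) : tt (-x) = -tt x := by
  rw [tt, tt, show 2 * -x = -(2*x) by ring, Real.cosh_neg, Real.sinh_neg, neg_div]

lemma FF_odd (x : ℝ) : FF (-x) = -FF x := by
  have h1 : (∫ u in (0:ℝ)..x, (w (-u))^3) = ∫ u in (-x)..(-(0:ℝ)), (w u)^3 :=
    intervalIntegral.integral_comp_neg (fun u => (w u)^3)
  have h2 : (∫ u in (0:ℝ)..x, (w (-u))^3) = FF x := by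
    rw [FF]; congr 1; funext u; rw [w_even]
  rw [h2] at h1
  rw [FF, show -(0:ℝ) = 0 by ring] at h1
  have h3 : (∫ u in (0:ℝ)..(-x), w u ^3) = -(∫ u in (-x)..(0:ℝ), w u ^3) := by
    rw [← intervalIntegral.integral_symm]
  rw [FF, h3, ← h1, FF]

lemma FF_nonneg {x : ℝ} (hx : 0 ≤ x) : 0 ≤ FF x :=
  intervalIntegral.integral_nonneg hx (fun u _ => pow_nonneg (w_pos u).le 3)

lemma FF_abs_le (x : ℝ) : |FF x| ≤ 3 := by
  suffices h : ∀ y : ℝ, 0 ≤ y → |FF y| ≤ 3 by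
    rcases le_or_gt 0 x with hx | hx
    · exact h x hx
    · have := h (-x) (by linarith)
      rwa [FF_odd, abs_neg] at this
  intro y hy
  rw [abs_of_nonneg (FF_nonneg hy)]
  have hle : ∀ u ∈ Set.Icc (0:ℝ) y, (w u)^3 ≤ 8 * Real.exp (-3*u) := by
    intro u hu
    have h1 : w u ≤ 2 * Real.exp (-u) := by
      have := w_le_exp u
      rw [abs_of_nonneg hu.1] at this
      exact this
    calc (w u)^3 ≤ (2 * Real.exp (-u))^3 :=
          pow_le_pow_left₀ (w_pos u).le h1 3
      _ = 8 * Real.exp (-3*u) := by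
          rw [mul_pow, ← Real.exp_nat_mul]
          norm_num
  have hWint : IntervalIntegrable (fun u => (w u)^3) volume 0 y :=
    (continuous_w.pow 3).intervalIntegrable _ _
  have hEint : IntervalIntegrable (fun u => 8 * Real.exp (-3*u)) volume 0 y :=
    (Continuous.intervalIntegrable (by continuity) _ _)
  have h2 : FF y ≤ ∫ u in (0:ℝ)..y, 8 * Real.exp (-3*u) := by
    rw [FF]
    apply intervalIntegral.integral_mono_on hy hWint hEint
    exact hle
  have h3 : (∫ u in (0:ℝ)..y, 8 * Real.exp (-3*u)) = 8/3 - (8/3) * Real.exp (-3*y) := by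
    have hanti : ∀ u : ℝ, HasDerivAt (fun v => -(8/3) * Real.exp (-3*v)) (8 * Real.exp (-3*u)) u := by
      intro u
      have h := ((Real.hasDerivAt_exp (-3*u)).comp u ((hasDerivAt_id u).const_mul (-3))).const_mul (-(8/3) : ℝ)
      simp only [Function.comp_def, mul_one] at h
      refine h.congr_deriv (Eq.symm ?_)
      ring
    rw [intervalIntegral.integral_eq_sub_of_hasDerivAt (fun u _ => hanti u) hEint]
    simp [Real.exp_zero]
    ring
  have h4 : (0:ℝ) < Real.exp (-3*y) := Real.exp_pos _
  linarith

lemma FF_bounds (n : ℕ) : ∃ C : ℝ, 0 ≤ C ∧ ∀ i ≤ n, ∀ x, |iteratedDeriv i FF x| ≤ C := by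
  obtain ⟨C, hC0, hw, _⟩ := wt_bounds n
  have hwB : ∀ i ≤ n, ∀ x, |iteratedDeriv i w x| ≤ C := by
    intro i hi x
    exact (hw i hi x).trans (mul_le_of_le_one_right hC0 (exp_neg_abs_le_one x))
  have hww : ∀ i ≤ n, ∀ x, |iteratedDeriv i (fun y => w y * w y) x| ≤ 2^n * C * C :=
    fun i hi x => by
      simpa using iter_mul_bound contDiff_w contDiff_w (fun _ => zero_le_one) hC0 hC0
        (fun i hi x => by simpa using hwB i hi x) hwB i hi x
  have hwww : ∀ i ≤ n, ∀ x, |iteratedDeriv i (fun y => w y * (w y * w y)) x| ≤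
      2^n * C * (2^n * C * C) :=
    fun i hi x => by
      simpa using iter_mul_bound contDiff_w (contDiff_w.mul contDiff_w) (fun _ => zero_le_one) hC0
        (mul_nonneg (mul_nonneg (by positivity) hC0) hC0)
        (fun i hi x => by simpa using hwB i hi x) hww i hi x
  refine ⟨max 3 (2^n * C * (2^n * C * C)), by positivity, ?_⟩
  intro i hi x
  match i, hi with
  | 0, _ =>
    rw [iteratedDeriv_zero]
    exact (FF_abs_le x).trans (le_max_left _ _)
  | (j+1), hj =>
    have hj' : j ≤ n := Nat.le_of_succ_le hj
    rw [iteratedDeriv_succ']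
    have hderiv : deriv FF = fun y => w y * (w y * w y) := by
      rw [deriv_FF]; funext y; ring
    rw [hderiv]
    exact (hwww j hj' x).trans (le_max_right _ _)

lemma RR_decay (n : ℕ) : ∃ C : ℝ, 0 ≤ C ∧
    ∀ i ≤ n, ∀ x, |iteratedDeriv i RR x| ≤ C * Real.exp (-|x|) := by
  obtain ⟨C, hC0, hw, ht⟩ := wt_bounds n
  obtain ⟨D, hD0, hF⟩ := FF_bounds n
  have hwB : ∀ i ≤ n, ∀ x, |iteratedDeriv i w x| ≤ C := by
    intro i hi x
    exact (hw i hi x).trans (mul_le_of_le_one_right hC0 (exp_neg_abs_le_one x))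
  -- A = (w*w)*(w*w), decaying
  have hww : ∀ i ≤ n, ∀ x, |iteratedDeriv i (fun y => w y * w y) x| ≤
      2^n * C * C * Real.exp (-|x|) :=
    iter_mul_bound contDiff_w contDiff_w (fun x => (Real.exp_pos _).le) hC0 hC0 hw hwB
  have hwwB : ∀ i ≤ n, ∀ x, |iteratedDeriv i (fun y => w y * w y) x| ≤ 2^n * C * C := by
    intro i hi x
    exact (hww i hi x).trans (mul_le_of_le_one_right
      (mul_nonneg (mul_nonneg (by positivity) hC0) hC0) (exp_neg_abs_le_one x))
  have hA : ∀ i ≤ n, ∀ x, |iteratedDeriv i (fun y => (w y * w y) * (w y * w y)) x| ≤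
      2^n * (2^n * C * C) * (2^n * C * C) * Real.exp (-|x|) :=
    iter_mul_bound (contDiff_w.mul contDiff_w) (contDiff_w.mul contDiff_w)
      (fun x => (Real.exp_pos _).le) (mul_nonneg (mul_nonneg (by positivity) hC0) hC0)
      (mul_nonneg (mul_nonneg (by positivity) hC0) hC0) hww hwwB
  -- B = w * (tt * FF), decaying
  have htF : ∀ i ≤ n, ∀ x, |iteratedDeriv i (fun y => tt y * FF y) x| ≤ 2^n * C * D :=
    fun i hi x => by
      simpa using iter_mul_bound contDiff_tt contDiff_FF (fun _ => zero_le_one) hC0 hD0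
        (fun i hi x => by simpa using ht i hi x) hF i hi x
  have hB : ∀ i ≤ n, ∀ x, |iteratedDeriv i (fun y => w y * (tt y * FF y)) x| ≤
      2^n * C * (2^n * C * D) * Real.exp (-|x|) :=
    iter_mul_bound contDiff_w (contDiff_tt.mul contDiff_FF)
      (fun x => (Real.exp_pos _).le) hC0
      (mul_nonneg (mul_nonneg (by positivity) hC0) hD0) hw htF
  refine ⟨(3/2) * (2^n * (2^n * C * C) * (2^n * C * C) + 2^n * C * (2^n * C * D)), ?_, ?_⟩
  · have h1 : (0:ℝ) ≤ 2^n * (2^n * C * C) * (2^n * C * C) := by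
      have : (0:ℝ) ≤ 2^n * C * C := mul_nonneg (mul_nonneg (by positivity) hC0) hC0
      positivity
    have h2 : (0:ℝ) ≤ 2^n * C * (2^n * C * D) :=
      mul_nonneg (mul_nonneg (by positivity) hC0)
        (mul_nonneg (mul_nonneg (by positivity) hC0) hD0)
    linarith
  intro i hi x
  have hRReq : RR = fun y => (-(3/2) : ℝ) *
      ((fun y => (w y * w y) * (w y * w y)) y + (fun y => w y * (tt y * FF y)) y) := by
    funext y
    rw [RR]; ring
  rw [hRReq, iteratedDeriv_cmul
    (((contDiff_w.mul contDiff_w).mul (contDiff_w.mul contDiff_w)).add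
      (contDiff_w.mul (contDiff_tt.mul contDiff_FF))) _ i x]
  rw [iteratedDeriv_add' ((contDiff_w.mul contDiff_w).mul (contDiff_w.mul contDiff_w))
      (contDiff_w.mul (contDiff_tt.mul contDiff_FF)) i x]
  rw [abs_mul]
  have habs : |(-(3/2) : ℝ)| = 3/2 := by norm_num
  rw [habs]
  have h8 := abs_add_le (iteratedDeriv i (fun y => (w y * w y) * (w y * w y)) x)
    (iteratedDeriv i (fun y => w y * (tt y * FF y)) x)
  have h9 := hA i hi x
  have h10 := hB i hi x
  nlinarith [h8, h9, h10]

lemma memY_RR : MemY RR := by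
  constructor
  · exact contDiff_RR
  · intro k
    obtain ⟨C, hC0, hC⟩ := RR_decay k
    refine ⟨C + 1, by linarith, 1, one_pos, ?_⟩
    intro y
    rw [Real.rpow_one]
    have h1 := hC k le_rfl y
    have h2 : (0:ℝ) < Real.exp (-|y|) := Real.exp_pos _
    have key : C * Real.exp (-|y|) ≤ (C+1) * (1 + |y|) * Real.exp (-|y|) := by
      nlinarith [mul_nonneg (mul_nonneg hC0 (abs_nonneg y)) h2.le,
        mul_nonneg (abs_nonneg y) h2.le, h2.le]
    linarith [h1, key]

lemma RR_even (y : ℝ) : RR (-y) = RR y := by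
  rw [RR, RR, w_even, tt_odd, FF_odd]
  ring


/-! ### Q and the ODE -/

lemma Q_eq (x : ℝ) : Q x = 3 ^ ((1/4):ℝ) * w x := by
  rw [Q]
  have h1 : (Real.cosh (2*x))⁻¹ ^ 2 = (w x)^4 := by rw [← w_sq]; ring
  rw [h1]
  rw [Real.mul_rpow (by norm_num) (pow_nonneg (w_pos x).le 4)]
  congr 1
  rw [← Real.rpow_natCast (w x) 4, ← Real.rpow_mul (w_pos x).le]
  norm_num

lemma Q_pow4 (x : ℝ) : Q x ^ 4 = 3 * w x ^ 4 := by
  rw [Q_eq, mul_pow]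
  congr 1
  rw [← Real.rpow_natCast ((3:ℝ) ^ ((1/4):ℝ)) 4, ← Real.rpow_mul (by norm_num : (0:ℝ) ≤ 3)]
  norm_num

def R1 (x : ℝ) : ℝ := (9/2)*(tt x * w x^4) - 3*(w x^5 * FF x) + (3/2)*(tt x^2 * (w x * FF x))
def R2 (x : ℝ) : ℝ := 6*(w x)^8 - (33/2)*(tt x)^2*(w x)^4 + 21*tt x*(w x)^5*FF x
  - (3/2)*(tt x)^3*(w x)*FF x

lemma hasDerivAt_RR (x : ℝ) : HasDerivAt RR (R1 x) x := by
  have hw := hasDerivAt_w x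
  have ht := hasDerivAt_tt x
  have hF := hasDerivAt_FF x
  have h := (((hw.pow 4).const_mul ((-(3/2)):ℝ)).sub
    ((ht.mul (hw.mul hF)).const_mul ((3:ℝ)/2)))
  refine h.congr_deriv (Eq.symm ?_)
  rw [R1]
  push_cast [Pi.mul_apply, Pi.pow_apply]
  linear_combination (-3 * w x * FF x) * sq_tt x

lemma hasDerivAt_R1 (x : ℝ) : HasDerivAt R1 (R2 x) x := by
  have hw := hasDerivAt_w x
  have ht := hasDerivAt_tt x
  have hF := hasDerivAt_FF x
  have h := (((ht.mul (hw.pow 4)).const_mul ((9:ℝ)/2)).sub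
      (((hw.pow 5).mul hF).const_mul (3:ℝ))).add
      (((ht.pow 2).mul (hw.mul hF)).const_mul ((3:ℝ)/2))
  refine h.congr_deriv (Eq.symm ?_)
  rw [R2]
  push_cast [Pi.mul_apply, Pi.pow_apply]
  linear_combination (6*tt x*w x*FF x + 9*w x^4) * sq_tt x

lemma deriv_RR : deriv RR = R1 := funext fun z => (hasDerivAt_RR z).deriv

lemma deriv2_RR (y : ℝ) : iteratedDeriv 2 RR y = R2 y := by
  rw [show (2:ℕ) = 1 + 1 from rfl, iteratedDeriv_succ, iteratedDeriv_one, deriv_RR]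
  exact (hasDerivAt_R1 y).deriv

lemma ode_RR (y : ℝ) : -iteratedDeriv 2 RR y + RR y - 5 * Q y ^ 4 * RR y = 5 * Q y ^ 4 := by
  rw [deriv2_RR, Q_pow4, RR, R2]
  linear_combination ((3/2)*tt y*w y*FF y + (33/2)*w y^4 - 15*w y^4 * (-(3/2)*(w y)^4 - (3/2)*(tt y * (w y * FF y)))*0) * sq_tt y


/-! ### Integration -/

lemma integrable_decay : Integrable (fun x : ℝ => Real.exp (-|x|)) := by
  have h1 : IntegrableOn (fun x : ℝ => Real.exp (-|x|)) (Ioi 0) := by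
    apply ((exp_neg_integrableOn_Ioi 0 one_pos)).congr_fun _ measurableSet_Ioi
    intro x hx
    show Real.exp (-1 * x) = Real.exp (-|x|)
    rw [abs_of_pos (mem_Ioi.mp hx)]
    ring_nf
  have h2 : IntegrableOn (fun x : ℝ => Real.exp (-|x|)) (Iic 0) := by
    apply (integrableOn_exp_Iic 0).congr_fun _ measurableSet_Iic
    intro x hx
    show Real.exp x = Real.exp (-|x|)
    rw [abs_of_nonpos (mem_Iic.mp hx), neg_neg]
  rw [← integrableOn_univ, ← Set.Iic_union_Ioi (a := (0:ℝ))]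
  exact h2.union h1

lemma integrable_of_decay {f : ℝ → ℝ} (hf : Continuous f) {C : ℝ}
    (h : ∀ x, |f x| ≤ C * Real.exp (-|x|)) : Integrable f := by
  apply Integrable.mono' (integrable_decay.const_mul C) hf.aestronglyMeasurable
  filter_upwards with x
  rw [Real.norm_eq_abs]
  exact h x

lemma rpow_three_le : (3:ℝ) ^ ((1/4):ℝ) ≤ 3 := by
  calc (3:ℝ) ^ ((1/4):ℝ) ≤ 3 ^ (1:ℝ) :=
        Real.rpow_le_rpow_of_exponent_le (by norm_num) (by norm_num)
    _ = 3 := Real.rpow_one 3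
lemma rpow_three_pos : (0:ℝ) < (3:ℝ) ^ ((1/4):ℝ) := Real.rpow_pos_of_pos (by norm_num) _

lemma continuous_Q : Continuous Q := by
  have : Q = fun x => 3 ^ ((1/4):ℝ) * w x := funext Q_eq
  rw [this]
  exact continuous_const.mul continuous_w

lemma abs_Q_le (x : ℝ) : |Q x| ≤ 6 * Real.exp (-|x|) := by
  rw [Q_eq, abs_mul, abs_of_pos rpow_three_pos, abs_of_pos (w_pos x)]
  have h1 := w_le_exp x
  have h2 := mul_le_mul rpow_three_le h1 (w_pos x).le (by norm_num : (0:ℝ) ≤ 3)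
  linarith

lemma integrable_Q : Integrable Q := integrable_of_decay continuous_Q abs_Q_le

lemma continuous_RR : Continuous RR := contDiff_RR.continuous

lemma integrable_QRR : Integrable (fun y => Q y * RR y) := by
  obtain ⟨C, hC0, hC⟩ := RR_decay 0
  apply integrable_of_decay (continuous_Q.mul continuous_RR) (C := 6 * C)
  intro x
  have h1 := abs_Q_le x
  have h2 : |RR x| ≤ C := by
    have := hC 0 le_rfl x
    rw [iteratedDeriv_zero] at this
    exact this.trans (mul_le_of_le_one_right hC0 (exp_neg_abs_le_one x))
  rw [Pi.mul_apply, abs_mul]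
  have := mul_le_mul h1 h2 (abs_nonneg _) (by positivity)
  calc |Q x| * |RR x| ≤ 6 * Real.exp (-|x|) * C := this
    _ = 6 * C * Real.exp (-|x|) := by ring

def Phi (x : ℝ) : ℝ := ((w x^2 * FF x) - tt x * w x) * ((3:ℝ)/4) * (3:ℝ) ^ ((1/4):ℝ)

lemma hasDerivAt_Phi (x : ℝ) : HasDerivAt Phi (Q x * RR x + (3/4) * Q x) x := by
  have hw := hasDerivAt_w x
  have ht := hasDerivAt_tt x
  have hF := hasDerivAt_FF x
  have h := ((((hw.pow 2).mul hF).sub (ht.mul hw)).mul_const ((3:ℝ)/4)).mul_const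
    ((3:ℝ) ^ ((1/4):ℝ))
  refine h.congr_deriv (Eq.symm ?_)
  rw [Q_eq, RR]
  push_cast [Pi.mul_apply, Pi.pow_apply]
  linear_combination ((3:ℝ) ^ ((1/4):ℝ) * (-(9/4)) * w x) * sq_tt x

lemma tt_zero : tt 0 = 0 := by
  rw [tt]
  norm_num

lemma FF_zero : FF 0 = 0 := by
  rw [FF, intervalIntegral.integral_same]

lemma Phi_zero : Phi 0 = 0 := by
  rw [Phi, tt_zero, FF_zero]
  ring

lemma abs_Phi_le (x : ℝ) : |Phi x| ≤ 24 * Real.exp (-|x|) := by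
  rw [Phi]
  have h1 : |w x ^2 * FF x - tt x * w x| ≤ 8 * Real.exp (-|x|) := by
    have ha : |w x ^2 * FF x| ≤ 6 * Real.exp (-|x|) := by
      rw [abs_mul, abs_of_pos (pow_pos (w_pos x) 2)]
      have hw1 := w_le_one x
      have hwe := w_le_exp x
      have hF := FF_abs_le x
      nlinarith [w_pos x, abs_nonneg (FF x), Real.exp_pos (-|x|)]
    have hb : |tt x * w x| ≤ 2 * Real.exp (-|x|) := by
      rw [abs_mul, abs_of_pos (w_pos x)]
      have := abs_tt_le x
      have hwe := w_le_exp x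
      nlinarith [w_pos x, abs_nonneg (tt x), Real.exp_pos (-|x|)]
    calc |w x ^2 * FF x - tt x * w x| ≤ |w x ^2 * FF x| + |tt x * w x| := abs_sub _ _
      _ ≤ 8 * Real.exp (-|x|) := by linarith
  rw [abs_mul, abs_mul]
  have h2 : |(3:ℝ)/4| = 3/4 := by norm_num
  have h3 : |(3:ℝ) ^ ((1/4):ℝ)| = (3:ℝ) ^ ((1/4):ℝ) := abs_of_pos rpow_three_pos
  rw [h2, h3]
  nlinarith [rpow_three_le, rpow_three_pos, abs_nonneg (w x ^2 * FF x - tt x * w x),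
    Real.exp_pos (-|x|)]

lemma tendsto_Phi_top : Tendsto Phi atTop (𝓝 0) := by
  have hb : ∀ x, ‖Phi x‖ ≤ 24 * Real.exp (-|x|) := fun x => by
    rw [Real.norm_eq_abs]; exact abs_Phi_le x
  refine squeeze_zero_norm hb ?_
  have h1 : Tendsto (fun x : ℝ => 24 * Real.exp (-x)) atTop (𝓝 0) := by
    simpa using (Real.tendsto_exp_neg_atTop_nhds_zero.const_mul 24)
  apply h1.congr'
  filter_upwards [eventually_ge_atTop (0:ℝ)] with x hx
  rw [abs_of_nonneg hx]

lemma tendsto_Phi_bot : Tendsto Phi atBot (𝓝 0) := by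
  have hb : ∀ x, ‖Phi x‖ ≤ 24 * Real.exp (-|x|) := fun x => by
    rw [Real.norm_eq_abs]; exact abs_Phi_le x
  refine squeeze_zero_norm hb ?_
  have h1 : Tendsto (fun x : ℝ => 24 * Real.exp x) atBot (𝓝 0) := by
    simpa using (Real.tendsto_exp_atBot.const_mul 24)
  apply h1.congr'
  filter_upwards [eventually_le_atBot (0:ℝ)] with x hx
  rw [abs_of_nonpos hx, neg_neg]

lemma integral_identity : (∫ y, Q y * RR y) = -(3/4) * ∫ y, Q y := by
  have hG : Integrable (fun y => Q y * RR y + (3/4) * Q y) :=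
    integrable_QRR.add (integrable_Q.const_mul _)
  have hPhicont : Continuous Phi := by
    apply Continuous.mul
    apply Continuous.mul
    · exact ((continuous_w.pow 2).mul (contDiff_FF.continuous)).sub
        (contDiff_tt.continuous.mul continuous_w)
    · exact continuous_const
    · exact continuous_const
  have hIoi : (∫ y in Ioi (0:ℝ), (Q y * RR y + (3/4) * Q y)) = 0 - Phi 0 :=
    integral_Ioi_of_hasDerivAt_of_tendsto hPhicont.continuousWithinAt
      (fun y _ => hasDerivAt_Phi y) hG.integrableOn tendsto_Phi_top
  have hIic : (∫ y in Iic (0:ℝ), (Q y * RR y + (3/4) * Q y)) = Phi 0 - 0 :=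
    integral_Iic_of_hasDerivAt_of_tendsto hPhicont.continuousWithinAt
      (fun y _ => hasDerivAt_Phi y) hG.integrableOn tendsto_Phi_bot
  have key : (∫ y, (Q y * RR y + (3/4) * Q y)) = 0 := by
    rw [← intervalIntegral.integral_Iic_add_Ioi hG.integrableOn hG.integrableOn, hIoi, hIic]
    ring
  rw [integral_add integrable_QRR (integrable_Q.const_mul _), integral_const_mul] at key
  linarith [key]


/-! ### Uniqueness -/

def Y (x : ℝ) : ℝ := Real.sqrt (Real.cosh (2*x)) - 2 * (w x)^3
def Y1 (x : ℝ) : ℝ := tt x * Real.sqrt (Real.cosh (2*x)) + 6 * (tt x * (w x)^3)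

lemma Sw_one (x : ℝ) : Real.sqrt (Real.cosh (2*x)) * w x = 1 := by
  rw [w]
  exact mul_inv_cancel₀ (S_pos x).ne'

lemma hasDerivAt_Y (x : ℝ) : HasDerivAt Y (Y1 x) x := by
  have h := (hasDerivAt_S x).sub (((hasDerivAt_w x).pow 3).const_mul (2:ℝ))
  refine h.congr_deriv (Eq.symm ?_)
  rw [Y1]
  push_cast
  ring

lemma hasDerivAt_Y1 (x : ℝ) :
    HasDerivAt Y1 ((1 - 15 * w x^4) * Y x) x := by
  have h := ((hasDerivAt_tt x).mul (hasDerivAt_S x)).add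
    (((hasDerivAt_tt x).mul ((hasDerivAt_w x).pow 3)).const_mul (6:ℝ))
  refine h.congr_deriv (Eq.symm ?_)
  rw [Y]
  push_cast [Pi.mul_apply, Pi.pow_apply]
  linear_combination (30*w x^3 + Real.sqrt (Real.cosh (2*x))) * sq_tt x
    + (-16*w x^3) * Sw_one x

lemma Y_zero : Y 0 = -1 := by
  rw [Y, w]
  norm_num

lemma tt_zero' : tt 0 = 0 := tt_zero

lemma Y1_zero : Y1 0 = 0 := by
  rw [Y1, tt_zero]
  ring

lemma Y_ge (x : ℝ) : Real.exp x / 2 + (-2) ≤ Y x := by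
  rw [Y]
  have h1 : w x ^ 3 ≤ 1 := pow_le_one₀ (w_pos x).le (w_le_one x)
  have h2 : Real.exp x / 2 ≤ Real.sqrt (Real.cosh (2*x)) := by
    rw [show Real.sqrt (Real.cosh (2*x)) = Real.sqrt (Real.cosh (2*x)) from rfl]
    have h3 : (Real.exp x / 2) ^ 2 ≤ Real.cosh (2*x) := by
      rw [Real.cosh_eq]
      have h4 : Real.exp (2*x) = Real.exp x ^ 2 := by
        rw [← Real.exp_nat_mul]; norm_num
      nlinarith [Real.exp_pos (2*x), Real.exp_pos (-(2*x)), Real.exp_pos x]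
    calc Real.exp x / 2 = Real.sqrt ((Real.exp x / 2)^2) := by
          rw [Real.sqrt_sq (by positivity)]
      _ ≤ Real.sqrt (Real.cosh (2*x)) := Real.sqrt_le_sqrt h3
  linarith

lemma tendsto_Y_atTop : Tendsto Y atTop atTop := by
  apply tendsto_atTop_mono Y_ge
  apply tendsto_atTop_add_const_right
  exact Real.tendsto_exp_atTop.atTop_div_const two_pos

lemma tendsto_zero_of_MemY {f : ℝ → ℝ} (hf : MemY f) : Tendsto f atTop (𝓝 0) := by
  obtain ⟨C, hC, r, hr, hb⟩ := hf.2 0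
  simp only [iteratedDeriv_zero] at hb
  set n := ⌈r⌉₊ with hn
  have h0 := tendsto_pow_mul_exp_neg_atTop_nhds_zero n
  have h1 : Tendsto (fun x : ℝ => 1 + x) atTop atTop :=
    tendsto_atTop_add_const_left atTop 1 tendsto_id
  have h2 : Tendsto (fun x : ℝ => (C * Real.exp 1) * ((1+x)^n * Real.exp (-(1+x)))) atTop (𝓝 0) := by
    have := (h0.comp h1).const_mul (C * Real.exp 1)
    simpa using this
  have h3 : Tendsto (fun x : ℝ => C * ((1+x)^n * Real.exp (-x))) atTop (𝓝 0) := by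
    apply h2.congr
    intro x
    have : Real.exp (-x) = Real.exp 1 * Real.exp (-(1+x)) := by
      rw [← Real.exp_add]; ring_nf
    rw [this]; ring
  apply squeeze_zero_norm' _ h3
  filter_upwards [eventually_ge_atTop (0:ℝ)] with x hx
  rw [Real.norm_eq_abs]
  have h4 := hb x
  rw [abs_of_nonneg hx] at h4
  have h5 : (1 + x) ^ r ≤ (1+x)^(n:ℕ) := by
    rw [← Real.rpow_natCast (1+x) n]
    exact Real.rpow_le_rpow_of_exponent_le (by linarith) (Nat.le_ceil r)
  have h6 : (0:ℝ) < Real.exp (-x) := Real.exp_pos _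
  have h7 := mul_le_mul_of_nonneg_left (mul_le_mul_of_nonneg_right h5 h6.le) hC.le
  calc |f x| ≤ C * (1 + x) ^ r * Real.exp (-x) := h4
    _ = C * ((1+x)^r * Real.exp (-x)) := by ring
    _ ≤ C * ((1+x)^(n:ℕ) * Real.exp (-x)) := h7

lemma iteratedDeriv_sub' {f g : ℝ → ℝ} (hf : ContDiff ℝ (⊤:ℕ∞) f) (hg : ContDiff ℝ (⊤:ℕ∞) g)
    (n : ℕ) (x : ℝ) :
    iteratedDeriv n (fun y => f y - g y) x = iteratedDeriv n f x - iteratedDeriv n g x := by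
  rw [← iteratedDerivWithin_univ, ← iteratedDerivWithin_univ, ← iteratedDerivWithin_univ]
  exact iteratedDerivWithin_sub (mem_univ x) uniqueDiffOn_univ
    ((hf.of_le (natle n)).contDiffWithinAt) ((hg.of_le (natle n)).contDiffWithinAt)

lemma hLip (τ : ℝ) :
    LipschitzWith 16 (fun p : ℝ × ℝ => (p.2, (1 - 15 * w τ^4) * p.1)) := by
  apply LipschitzWith.of_dist_le_mul
  intro p q
  have hw4 : |1 - 15 * w τ^4| ≤ 15 := by
    have h1 : 0 < w τ := w_pos τ
    have h2 : w τ ^ 4 ≤ 1 := pow_le_one₀ h1.le (w_le_one τ)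
    rw [abs_le]
    constructor <;> nlinarith [pow_pos h1 4]
  have hd1 : dist p.1 q.1 ≤ dist p q := by rw [Prod.dist_eq]; exact le_max_left _ _
  have hd2 : dist p.2 q.2 ≤ dist p q := by rw [Prod.dist_eq]; exact le_max_right _ _
  rw [Prod.dist_eq]
  apply max_le
  · calc dist p.2 q.2 ≤ dist p q := hd2
      _ ≤ 16 * dist p q := by nlinarith [dist_nonneg (x := p) (y := q)]
  · have he : (1 - 15 * w τ^4) * p.1 - (1 - 15 * w τ^4) * q.1
        = (1 - 15 * w τ^4) * (p.1 - q.1) := by ring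
    rw [Real.dist_eq, he, abs_mul]
    have h5 : |p.1 - q.1| ≤ dist p q := by
      rw [← Real.dist_eq]; exact hd1
    have h6 := mul_le_mul hw4 h5 (abs_nonneg _) (by norm_num)
    have : (15:ℝ) * dist p q ≤ 16 * dist p q := by nlinarith [dist_nonneg (x := p) (y := q)]
    calc |1 - 15 * w τ^4| * |p.1 - q.1| ≤ 15 * dist p q := h6
      _ ≤ 16 * dist p q := this

lemma RR_unique (R' : ℝ → ℝ) (hR' : MemY R') (hEv : ∀ y, R' (-y) = R' y)
    (hODE : ∀ y, -iteratedDeriv 2 R' y + R' y - 5 * Q y ^ 4 * R' y = 5 * Q y ^ 4) :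
    R' = RR := by
  set d : ℝ → ℝ := fun y => R' y - RR y with hd
  have hdC : ContDiff ℝ (⊤:ℕ∞) d := hR'.1.sub contDiff_RR
  have hdiff : Differentiable ℝ d := hdC.differentiable (by simp)
  have hdC2 : ContDiff ℝ (⊤:ℕ∞) (deriv d) := (contDiff_infty_iff_deriv.mp hdC).2
  have hdiff2 : Differentiable ℝ (deriv d) := hdC2.differentiable (by simp)
  have hd_even : ∀ y, d (-y) = d y := fun y => by
    simp only [hd, hEv y, RR_even y]
  have hd2 : ∀ y, deriv (deriv d) y = (1 - 15 * w y ^ 4) * d y := by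
    intro y
    have e2 : deriv (deriv d) y = iteratedDeriv 2 d y := by
      rw [show (2:ℕ) = 1 + 1 from rfl, iteratedDeriv_succ, iteratedDeriv_one]
    have e1 : iteratedDeriv 2 d y = iteratedDeriv 2 R' y - iteratedDeriv 2 RR y :=
      iteratedDeriv_sub' hR'.1 contDiff_RR 2 y
    rw [e2, e1]
    simp only [hd]
    linear_combination (-1) * hODE y + ode_RR y + (-5*(R' y - RR y)) * Q_pow4 y
  have hdd : ∀ y, HasDerivAt d (deriv d y) y := fun y => (hdiff y).hasDerivAt
  have hd'0 : deriv d 0 = 0 := by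
    have hneg : HasDerivAt (fun y : ℝ => -y) (-1) (0:ℝ) := hasDerivAt_neg 0
    have hcomp := (hdd (-0)).comp 0 hneg
    have hfun : (d ∘ fun y : ℝ => -y) = d := funext fun y => hd_even y
    rw [hfun] at hcomp
    have := (hdd 0).unique hcomp
    rw [neg_zero] at this
    linarith
  set A := d 0 with hA
  -- ODE uniqueness on [0, τ]
  have key : ∀ τ : ℝ, 0 ≤ τ → d τ = -A * Y τ := by
    intro τ hτ
    have hfc : ContinuousOn (fun σ => (d σ, deriv d σ)) (Icc 0 τ) :=
      (hdC.continuous.prodMk hdC2.continuous).continuousOn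
    have hgc : ContinuousOn (fun σ => (-A * Y σ, -A * Y1 σ)) (Icc 0 τ) := by
      apply Continuous.continuousOn
      apply Continuous.prodMk
      · exact continuous_const.mul (continuous_iff_continuousAt.mpr
          fun σ => (hasDerivAt_Y σ).continuousAt)
      · exact continuous_const.mul (continuous_iff_continuousAt.mpr
          fun σ => (hasDerivAt_Y1 σ).continuousAt)
    have hf' : ∀ σ ∈ Ico 0 τ, HasDerivWithinAt (fun σ => (d σ, deriv d σ))
        ((fun p : ℝ × ℝ => (p.2, (1 - 15 * w σ^4) * p.1)) (d σ, deriv d σ)) (Ici σ) σ := by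
      intro σ _
      have h2' : HasDerivAt (deriv d) ((1 - 15 * w σ^4) * d σ) σ := by
        have := (hdiff2 σ).hasDerivAt
        rwa [hd2 σ] at this
      exact ((hdd σ).prodMk h2').hasDerivWithinAt
    have hg' : ∀ σ ∈ Ico 0 τ, HasDerivWithinAt (fun σ => (-A * Y σ, -A * Y1 σ))
        ((fun p : ℝ × ℝ => (p.2, (1 - 15 * w σ^4) * p.1)) (-A * Y σ, -A * Y1 σ)) (Ici σ) σ := by
      intro σ _
      have hy1 : HasDerivAt (fun σ => -A * Y σ) (-A * Y1 σ) σ :=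
        (hasDerivAt_Y σ).const_mul (-A)
      have hy2 : HasDerivAt (fun σ => -A * Y1 σ) ((1 - 15 * w σ^4) * (-A * Y σ)) σ := by
        have := (hasDerivAt_Y1 σ).const_mul (-A)
        refine this.congr_deriv (Eq.symm ?_)
        ring
      exact (hy1.prodMk hy2).hasDerivWithinAt
    have hinit : ((fun σ => (d σ, deriv d σ)) 0) = ((fun σ => (-A * Y σ, -A * Y1 σ)) 0) := by
      have e1 : -A * Y 0 = d 0 := by rw [Y_zero]; ring
      have e2 : -A * Y1 0 = deriv d 0 := by rw [Y1_zero, hd'0]; ring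
      simp only [e1.symm, e2.symm]
    have huniq := ODE_solution_unique_of_mem_Icc_right
      (v := fun σ (p : ℝ × ℝ) => (p.2, (1 - 15 * w σ^4) * p.1))
      (s := fun _ => (univ : Set (ℝ × ℝ))) (K := 16)
      (fun σ _ => (hLip σ).lipschitzOnWith)
      hfc hf' (fun _ _ => mem_univ _) hgc hg' (fun _ _ => mem_univ _) hinit
    have := huniq ⟨hτ, le_rfl⟩
    exact congrArg Prod.fst this
  by_cases hA0 : A = 0
  · funext y
    have h0 : ∀ τ : ℝ, 0 ≤ τ → d τ = 0 := fun τ hτ => by rw [key τ hτ, hA0]; ring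
    have hdy : d y = 0 := by
      rcases le_or_gt 0 y with hy | hy
      · exact h0 y hy
      · have hh := h0 (-y) (by linarith)
        rwa [hd_even y] at hh
    have : R' y - RR y = 0 := hdy
    linarith
  · exfalso
    have htend : Tendsto d atTop (𝓝 0) := by
      have h1 := tendsto_zero_of_MemY hR'
      have h2 := tendsto_zero_of_MemY memY_RR
      simpa using h1.sub h2
    have hYt : Tendsto (fun τ => |A| * Y τ) atTop atTop :=
      tendsto_Y_atTop.const_mul_atTop (abs_pos.mpr hA0)
    have h1 : ∀ᶠ τ : ℝ in atTop, (1:ℝ) ≤ |A| * Y τ := hYt.eventually_ge_atTop 1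
    have h2 : ∀ᶠ τ : ℝ in atTop, ‖d τ‖ < 1 :=
      NormedAddCommGroup.tendsto_nhds_zero.mp htend 1 one_pos
    have h3 : ∀ᶠ τ : ℝ in atTop, (0:ℝ) ≤ τ := eventually_ge_atTop 0
    obtain ⟨τ, hτ1, hτ2, hτ3⟩ := (h1.and (h2.and h3)).exists
    have hdτ := key τ hτ3
    have habs : |d τ| = |A| * |Y τ| := by rw [hdτ, abs_mul, abs_neg]
    have h4 : |A| * Y τ ≤ |A| * |Y τ| := mul_le_mul_of_nonneg_left (le_abs_self _) (abs_nonneg _)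
    rw [Real.norm_eq_abs] at hτ2
    linarith

end GKdV
end

/-- Invertibility of the linearized operator in the direction `5Q⁴`: there exists
a unique even function `R ∈ 𝒴` with `LR = 5Q⁴`, and it satisfies `(Q,R) = −(3/4)∫Q`. -/
theorem invertibility_R :
    ∃ R : ℝ → ℝ,
      (MemY R ∧ (∀ y, R (-y) = R y) ∧
        (∀ y, -iteratedDeriv 2 R y + R y - 5 * Q y ^ 4 * R y = 5 * Q y ^ 4)) ∧
      ((∫ y, Q y * R y) = -(3/4) * ∫ y, Q y) ∧
      (∀ R' : ℝ → ℝ, MemY R' → (∀ y, R' (-y) = R' y) →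
        (∀ y, -iteratedDeriv 2 R' y + R' y - 5 * Q y ^ 4 * R' y = 5 * Q y ^ 4) →
        R' = R) := by
  refine ⟨GKdV.RR, ⟨GKdV.memY_RR, GKdV.RR_even, GKdV.ode_RR⟩, GKdV.integral_identity, ?_⟩
  intro R' h1 h2 h3
  exact GKdV.RR_unique R' h1 h2 h3
end
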